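/- arXiv:1806.00032 — 10 statements merged into one kernel-verified Lean document; each statement's English description precedes it below -/
import Mathlib

section
/- Let a₁, a₂ be real numbers and let x be a natural number. For all real numbers t₁, t₂, the family ((n₁,n₂) ↦ C_{n₁,n₂}^{(a₁,a₂)}(x) · t₁^{n₁} · t₂^{n₂} / (n₁! · n₂!)) indexed by ℕ × ℕ is summable and its sum equals exp(-(a₁t₁ + a₂t₂)) · (1 + t₁ + t₂)^x. -/
open Finset

/-- The falling factorial `x⁽ⁿ⁾ = x(x-1)⋯(x-n+1)`. -/
noncomputable def fallingFactorial (x : ℝ) (n : ℕ) : ℝ :=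
  ∏ j ∈ Finset.range n, (x - j)

/-- The multiple Charlier polynomial `C_{n₁,n₂}^{(a₁,a₂)}(x)`. -/
noncomputable def charlier (a₁ a₂ : ℝ) (n₁ n₂ : ℕ) (x : ℝ) : ℝ :=
  ∑ k ∈ Finset.range (n₁ + 1), ∑ l ∈ Finset.range (n₂ + 1),
    (n₁.choose k : ℝ) * (n₂.choose l : ℝ) * (-a₁) ^ (n₁ - k) * (-a₂) ^ (n₂ - l) *
      fallingFactorial x (k + l)

lemma ff_eq_descPochhammer (y : ℝ) (m : ℕ) :
    fallingFactorial y m = (descPochhammer ℝ m).eval y := by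
  induction m with
  | zero => simp [fallingFactorial]
  | succ n ih =>
      rw [fallingFactorial, Finset.prod_range_succ, ← fallingFactorial, ih,
        descPochhammer_succ_eval]

lemma ff_cast (x m : ℕ) : fallingFactorial (x : ℝ) m = (x.descFactorial m : ℝ) := by
  rw [ff_eq_descPochhammer, descPochhammer_eval_eq_descFactorial]

lemma ff_eq_zero {x m : ℕ} (h : x < m) : fallingFactorial (x : ℝ) m = 0 := by
  rw [ff_cast, Nat.descFactorial_eq_zero_iff_lt.2 h, Nat.cast_zero]

noncomputable def expTail (c : ℝ) (k : ℕ) (n : ℕ) : ℝ :=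
  if k ≤ n then c ^ (n - k) / (n - k).factorial else 0

lemma expTail_shift (c : ℝ) (k n : ℕ) : expTail c k (n + k) = c ^ n / n.factorial := by
  simp [expTail, Nat.add_sub_cancel]

lemma expTail_summable (c : ℝ) (k : ℕ) : Summable (expTail c k) := by
  refine (summable_nat_add_iff k).1 ?_
  simpa only [expTail_shift] using Real.summable_pow_div_factorial c

lemma expTail_abs (c : ℝ) (k n : ℕ) : |expTail c k n| = expTail |c| k n := by
  unfold expTail; split <;> simp [abs_div, abs_pow]

lemma expTail_summable_norm (c : ℝ) (k : ℕ) : Summable fun n => ‖expTail c k n‖ := by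
  simpa only [Real.norm_eq_abs, expTail_abs] using expTail_summable |c| k

lemma expTail_tsum (c : ℝ) (k : ℕ) : ∑' n, expTail c k n = Real.exp c := by
  have hs := expTail_summable c k
  rw [← Summable.sum_add_tsum_nat_add k hs]
  have h1 : ∑ i ∈ range k, expTail c k i = 0 :=
    Finset.sum_eq_zero fun i hi => by
      simp [expTail, Nat.not_le.2 (Finset.mem_range.1 hi)]
  rw [h1, zero_add]
  simp only [expTail_shift]
  rw [Real.exp_eq_exp_ℝ, NormedSpace.exp_eq_tsum_div]

lemma key1 (a t : ℝ) (k n : ℕ) :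
    (n.choose k : ℝ) * (-a) ^ (n - k) * t ^ n / n.factorial
      = t ^ k / k.factorial * expTail (-(a * t)) k n := by
  unfold expTail
  by_cases hk : k ≤ n
  · rw [if_pos hk]
    have hch : (n.choose k : ℝ) * (k.factorial : ℝ) * ((n - k).factorial : ℝ)
        = (n.factorial : ℝ) := by exact_mod_cast Nat.choose_mul_factorial_mul_factorial hk
    have ht : t ^ n = t ^ k * t ^ (n - k) := by
      rw [← pow_add, Nat.add_sub_cancel' hk]
    have hc : (-(a * t)) ^ (n - k) = (-a) ^ (n - k) * t ^ (n - k) := by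
      rw [neg_mul_eq_neg_mul, mul_pow]
    have h1 : (n.factorial : ℝ) ≠ 0 := Nat.cast_ne_zero.2 n.factorial_ne_zero
    have h2 : (k.factorial : ℝ) ≠ 0 := Nat.cast_ne_zero.2 k.factorial_ne_zero
    have h3 : ((n - k).factorial : ℝ) ≠ 0 := Nat.cast_ne_zero.2 (n - k).factorial_ne_zero
    field_simp [ht, hc]
    linear_combination ((-a) ^ (n - k) * t ^ k * t ^ (n - k)) * hch +
      ((n.choose k : ℝ) * (-a) ^ (n - k) * (k.factorial : ℝ) * ((n - k).factorial : ℝ)) * ht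
  · rw [if_neg hk, Nat.choose_eq_zero_of_lt (Nat.lt_of_not_le hk)]
    simp

lemma natcell {x k l : ℕ} (hkl : k + l ≤ x) :
    x.descFactorial (k + l)
      = k.factorial * l.factorial * (x.choose l * (x - l).choose k) := by
  have h1 : l ≤ x := le_trans (Nat.le_add_left l k) hkl
  have h2 : k ≤ x - l := by omega
  have e1 := Nat.choose_mul_factorial_mul_factorial hkl
  have e2 := Nat.choose_mul_factorial_mul_factorial h1
  have e3 := Nat.choose_mul_factorial_mul_factorial h2
  have hrw : x - l - k = x - (k + l) := by omega
  rw [hrw] at e3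
  apply Nat.eq_of_mul_eq_mul_right (Nat.factorial_pos (x - (k + l)))
  rw [Nat.descFactorial_eq_factorial_mul_choose]
  have e1' : (x.choose (k+l) : ℤ) * (k+l).factorial * (x - (k+l)).factorial
      = x.factorial := by exact_mod_cast e1
  have e2' : (x.choose l : ℤ) * l.factorial * (x - l).factorial = x.factorial := by
    exact_mod_cast e2
  have e3' : ((x-l).choose k : ℤ) * k.factorial * (x - (k+l)).factorial
      = (x - l).factorial := by exact_mod_cast e3
  have : ((k+l).factorial * x.choose (k+l) * (x - (k+l)).factorial : ℤ)
      = (k.factorial * l.factorial * (x.choose l * (x - l).choose k))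
          * (x - (k+l)).factorial := by
    linear_combination e1' - ((l.factorial : ℤ) * x.choose l) * e3' - e2'
  exact_mod_cast this

lemma cell {x k l : ℕ} (hl : l ≤ x) :
    fallingFactorial (x : ℝ) (k + l) / ((k.factorial : ℝ) * l.factorial)
      = (x.choose l : ℝ) * ((x - l).choose k : ℝ) := by
  by_cases h : k + l ≤ x
  · rw [ff_cast, natcell h]
    have h2 : (k.factorial : ℝ) ≠ 0 := Nat.cast_ne_zero.2 k.factorial_ne_zero
    have h3 : (l.factorial : ℝ) ≠ 0 := Nat.cast_ne_zero.2 l.factorial_ne_zero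
    push_cast
    field_simp
  · rw [ff_eq_zero (Nat.lt_of_not_le h),
      Nat.choose_eq_zero_of_lt (by omega : x - l < k)]
    simp

lemma binom_sum (x : ℕ) (t₁ t₂ : ℝ) :
    ∑ k ∈ range (x + 1), ∑ l ∈ range (x + 1),
        fallingFactorial (x : ℝ) (k + l) * t₁ ^ k * t₂ ^ l
          / ((k.factorial : ℝ) * l.factorial)
      = (1 + t₁ + t₂) ^ x := by
  have hbin : (1 + t₁ + t₂) ^ x
      = ∑ l ∈ range (x + 1), t₂ ^ l * (1 + t₁) ^ (x - l) * (x.choose l : ℝ) := by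
    rw [← add_pow]; ring_nf
  have hbin2 : ∀ l ∈ range (x + 1), t₂ ^ l * (1 + t₁) ^ (x - l) * (x.choose l : ℝ)
      = ∑ k ∈ range (x + 1),
          (x.choose l : ℝ) * ((x - l).choose k : ℝ) * t₁ ^ k * t₂ ^ l := by
    intro l hl
    have h1 : (1 + t₁) ^ (x - l) = ∑ k ∈ range (x - l + 1),
        t₁ ^ k * ((x - l).choose k : ℝ) := by
      rw [add_comm (1:ℝ) t₁, add_pow]
      simp
    have h2 : ∑ k ∈ range (x - l + 1), t₁ ^ k * ((x - l).choose k : ℝ)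
        = ∑ k ∈ range (x + 1), t₁ ^ k * ((x - l).choose k : ℝ) := by
      apply Finset.sum_subset
      · exact Finset.range_subset_range.2 (by omega)
      · intro k _ hk
        rw [Nat.choose_eq_zero_of_lt (by simp at hk ⊢; omega)]
        simp
    rw [h1, h2, Finset.mul_sum, Finset.sum_mul]
    apply Finset.sum_congr rfl
    intro k _
    ring
  rw [hbin, Finset.sum_congr rfl hbin2, Finset.sum_comm]
  apply Finset.sum_congr rfl
  intro l hl
  apply Finset.sum_congr rfl
  intro k _
  have hl' : l ≤ x := by have := Finset.mem_range.1 hl; omega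
  have := cell (x := x) (k := k) (l := l) hl'
  calc fallingFactorial (x : ℝ) (k + l) * t₁ ^ k * t₂ ^ l
        / ((k.factorial : ℝ) * l.factorial)
      = fallingFactorial (x : ℝ) (k + l) / ((k.factorial : ℝ) * l.factorial)
          * t₁ ^ k * t₂ ^ l := by ring
    _ = (x.choose l : ℝ) * ((x - l).choose k : ℝ) * t₁ ^ k * t₂ ^ l := by rw [this]
/-- Generating function for the multiple Charlier polynomials:
`e^{-(a₁t₁+a₂t₂)} (1+t₁+t₂)^x = ∑ C_{n₁,n₂}^{(a₁,a₂)}(x) t₁^{n₁} t₂^{n₂}/(n₁! n₂!)`. -/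
theorem charlier_generatingFunction (a₁ a₂ : ℝ) (x : ℕ) (t₁ t₂ : ℝ) :
    Summable (fun p : ℕ × ℕ =>
      charlier a₁ a₂ p.1 p.2 (x : ℝ) * t₁ ^ p.1 * t₂ ^ p.2 /
        ((p.1.factorial : ℝ) * (p.2.factorial : ℝ))) ∧
    ∑' p : ℕ × ℕ,
        charlier a₁ a₂ p.1 p.2 (x : ℝ) * t₁ ^ p.1 * t₂ ^ p.2 /
          ((p.1.factorial : ℝ) * (p.2.factorial : ℝ)) =
      Real.exp (-(a₁ * t₁ + a₂ * t₂)) * (1 + t₁ + t₂) ^ x := by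
  set c₁ : ℝ := -(a₁ * t₁) with hc₁
  set c₂ : ℝ := -(a₂ * t₂) with hc₂
  set g : ℕ × ℕ → ℝ := fun q =>
    fallingFactorial (x : ℝ) (q.1 + q.2) * t₁ ^ q.1 * t₂ ^ q.2
      / ((q.1.factorial : ℝ) * q.2.factorial) with hg
  set S : Finset (ℕ × ℕ) := range (x + 1) ×ˢ range (x + 1) with hS
  set F : ℕ × ℕ → ℕ × ℕ → ℝ := fun q p =>
    g q * expTail c₁ q.1 p.1 * expTail c₂ q.2 p.2 with hF
  -- pointwise rewriting of the summand
  have hterm : ∀ p : ℕ × ℕ,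
      charlier a₁ a₂ p.1 p.2 (x : ℝ) * t₁ ^ p.1 * t₂ ^ p.2 /
          ((p.1.factorial : ℝ) * (p.2.factorial : ℝ))
        = ∑ q ∈ S, F q p := by
    rintro ⟨n₁, n₂⟩
    set A : ℕ × ℕ → ℝ := fun q =>
      (n₁.choose q.1 : ℝ) * (n₂.choose q.2 : ℝ) * (-a₁) ^ (n₁ - q.1) *
          (-a₂) ^ (n₂ - q.2) * fallingFactorial (x : ℝ) (q.1 + q.2) *
          t₁ ^ n₁ * t₂ ^ n₂ / ((n₁.factorial : ℝ) * n₂.factorial) with hA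
    have step1 : charlier a₁ a₂ n₁ n₂ (x : ℝ) * t₁ ^ n₁ * t₂ ^ n₂ /
          ((n₁.factorial : ℝ) * (n₂.factorial : ℝ))
        = ∑ q ∈ range (n₁ + 1) ×ˢ range (n₂ + 1), A q := by
      rw [Finset.sum_product]
      simp only [charlier, Finset.sum_mul, Finset.sum_div, hA]
    have hA0 : ∀ q : ℕ × ℕ, (n₁ < q.1 ∨ n₂ < q.2) → A q = 0 := by
      rintro ⟨k, l⟩ (h | h) <;>
        simp [hA, Nat.choose_eq_zero_of_lt h]
    have hA0' : ∀ q : ℕ × ℕ, (x < q.1 ∨ x < q.2) → A q = 0 := by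
      rintro ⟨k, l⟩ h
      have : x < k + l := by rcases h with h | h <;> simp at h ⊢ <;> omega
      simp [hA, ff_eq_zero this]
    set N := n₁ + n₂ + x with hN
    have hsub1 : range (n₁ + 1) ×ˢ range (n₂ + 1) ⊆ range (N + 1) ×ˢ range (N + 1) :=
      Finset.product_subset_product (Finset.range_subset_range.2 (by omega))
        (Finset.range_subset_range.2 (by omega))
    have hsub2 : S ⊆ range (N + 1) ×ˢ range (N + 1) :=
      Finset.product_subset_product (Finset.range_subset_range.2 (by omega))
        (Finset.range_subset_range.2 (by omega))
    have step2 : ∑ q ∈ range (n₁ + 1) ×ˢ range (n₂ + 1), A q = ∑ q ∈ S, A q := by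
      rw [Finset.sum_subset hsub1, Finset.sum_subset hsub2]
      · rintro ⟨k, l⟩ hq hq'
        simp only [hS, Finset.mem_product, Finset.mem_range, not_and_or, not_lt,
          Nat.lt_succ_iff] at hq'
        exact hA0' ⟨k, l⟩ (by omega)
      · rintro ⟨k, l⟩ hq hq'
        simp only [Finset.mem_product, Finset.mem_range, not_and_or, not_lt,
          Nat.lt_succ_iff] at hq'
        exact hA0 ⟨k, l⟩ (by omega)
    have step3 : ∀ q : ℕ × ℕ, A q = F q (n₁, n₂) := by
      rintro ⟨k, l⟩
      have k1 := key1 a₁ t₁ k n₁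
      have k2 := key1 a₂ t₂ l n₂
      calc A (k, l)
          = fallingFactorial (x : ℝ) (k + l) *
              ((n₁.choose k : ℝ) * (-a₁) ^ (n₁ - k) * t₁ ^ n₁ / n₁.factorial) *
              ((n₂.choose l : ℝ) * (-a₂) ^ (n₂ - l) * t₂ ^ n₂ / n₂.factorial) := by
            simp only [hA]; ring
        _ = fallingFactorial (x : ℝ) (k + l) *
              (t₁ ^ k / k.factorial * expTail c₁ k n₁) *
              (t₂ ^ l / l.factorial * expTail c₂ l n₂) := by rw [k1, k2]
        _ = F (k, l) (n₁, n₂) := by simp only [hF, hg]; ring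
    rw [step1, step2]
    exact Finset.sum_congr rfl fun q _ => step3 q
  -- summability of each piece
  have hnorm1 : ∀ q : ℕ × ℕ, Summable fun n => ‖g q * expTail c₁ q.1 n‖ := by
    intro q
    simpa [norm_mul, mul_comm] using (expTail_summable_norm c₁ q.1).mul_left ‖g q‖
  have hFsummable : ∀ q : ℕ × ℕ, Summable (F q) := by
    intro q
    have := summable_mul_of_summable_norm (R := ℝ)
      (f := fun n => g q * expTail c₁ q.1 n) (g := expTail c₂ q.2)
      (hnorm1 q) (expTail_summable_norm c₂ q.2)
    exact this
  have hFtsum : ∀ q : ℕ × ℕ, ∑' p : ℕ × ℕ, F q p = g q * Real.exp c₁ * Real.exp c₂ := by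
    intro q
    have h := tsum_mul_tsum_of_summable_norm (R := ℝ)
      (f := fun n => g q * expTail c₁ q.1 n) (g := expTail c₂ q.2)
      (hnorm1 q) (expTail_summable_norm c₂ q.2)
    calc ∑' p : ℕ × ℕ, F q p
        = ∑' p : ℕ × ℕ, (fun n => g q * expTail c₁ q.1 n) p.1 * expTail c₂ q.2 p.2 := rfl
      _ = (∑' n, g q * expTail c₁ q.1 n) * ∑' n, expTail c₂ q.2 n := h.symm
      _ = g q * Real.exp c₁ * Real.exp c₂ := by
          rw [tsum_mul_left, expTail_tsum, expTail_tsum]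
  have hsummable : Summable (fun p : ℕ × ℕ =>
      charlier a₁ a₂ p.1 p.2 (x : ℝ) * t₁ ^ p.1 * t₂ ^ p.2 /
        ((p.1.factorial : ℝ) * (p.2.factorial : ℝ))) := by
    refine Summable.congr ?_ fun p => (hterm p).symm
    exact summable_sum fun q _ => hFsummable q
  refine ⟨hsummable, ?_⟩
  rw [tsum_congr hterm, Summable.tsum_finsetSum fun q _ => hFsummable q]
  simp only [hFtsum]
  rw [← Finset.sum_mul, ← Finset.sum_mul]
  have hfin : ∑ q ∈ S, g q = (1 + t₁ + t₂) ^ x := by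
    rw [hS, Finset.sum_product]
    exact binom_sum x t₁ t₂
  rw [hfin, hc₁, hc₂, mul_assoc, ← Real.exp_add,
    show -(a₁ * t₁) + -(a₂ * t₂) = -(a₁ * t₁ + a₂ * t₂) by ring]
  ring
end

section
/- For all real numbers a₁, a₂, all natural numbers n₁, n₂, and every real number x, the inversion formula holds: x^{(n₁+n₂)} = Σ_{k=0}^{n₁} Σ_{ℓ=0}^{n₂} C(n₁,k) C(n₂,ℓ) a₁^{n₁-k} a₂^{n₂-ℓ} C_{k,ℓ}^{(a₁,a₂)}(x). -/
lemma key (a : ℝ) (n i : ℕ) :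
    ∑ k ∈ Finset.range (n+1),
      (n.choose k : ℝ) * (k.choose i : ℝ) * (a ^ (n-k) * (-a) ^ (k-i))
      = if i = n then 1 else 0 := by
  rcases le_or_gt i n with hi | hi
  · have hsub : Finset.Ico i (n+1) ⊆ Finset.range (n+1) := by
      intro k hk; simp only [Finset.mem_Ico] at hk; simp [hk.2]
    rw [← Finset.sum_subset hsub (by
      intro k hk hk'
      simp only [Finset.mem_range] at hk
      simp only [Finset.mem_Ico, not_and, not_lt] at hk'
      have : k < i := by omega
      simp [Nat.choose_eq_zero_of_lt this])]
    rw [Finset.sum_Ico_eq_sum_range]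
    have hN : n + 1 - i = (n - i) + 1 := by omega
    rw [hN]
    have : ∀ m ∈ Finset.range (n - i + 1),
        (n.choose (i+m) : ℝ) * ((i+m).choose i : ℝ) * (a ^ (n-(i+m)) * (-a) ^ ((i+m)-i))
        = (n.choose i : ℝ) * ((-a) ^ m * a ^ ((n-i) - m) * ((n-i).choose m : ℝ)) := by
      intro m hm
      simp only [Finset.mem_range] at hm
      have h1 : n.choose (i+m) * (i+m).choose i = n.choose i * (n - i).choose m := by
        have := Nat.choose_mul (n := n) (k := i + m) (s := i) (by omega)
        simpa [Nat.add_sub_cancel_left] using this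
      have h2 : (i + m) - i = m := by omega
      have h3 : n - (i + m) = (n - i) - m := by omega
      rw [h2, h3]
      have h1' : ((n.choose (i+m) : ℝ)) * ((i+m).choose i : ℝ) = (n.choose i : ℝ) * ((n-i).choose m : ℝ) := by
        exact_mod_cast congrArg (fun t : ℕ => (t : ℝ)) h1
      rw [h1']; ring
    rw [Finset.sum_congr rfl this, ← Finset.mul_sum, ← add_pow (-a) a (n - i)]
    have : -a + a = 0 := by ring
    rw [this]
    rcases eq_or_lt_of_le hi with h | h
    · simp [h]
    · have : i ≠ n := by omega
      simp [this, zero_pow (by omega : n - i ≠ 0)]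
  · have : ∀ k ∈ Finset.range (n+1),
        (n.choose k : ℝ) * (k.choose i : ℝ) * (a ^ (n-k) * (-a) ^ (k-i)) = 0 := by
      intro k hk
      simp only [Finset.mem_range] at hk
      have : k < i := by omega
      simp [Nat.choose_eq_zero_of_lt this]
    rw [Finset.sum_congr rfl this]
    have : i ≠ n := by omega
    simp [this]


lemma swap4 {A B : Finset ℕ} (f : ℕ → ℕ → ℕ → ℕ → ℝ) :
    ∑ k ∈ A, ∑ l ∈ B, ∑ i ∈ A, ∑ j ∈ B, f k l i j
    = ∑ i ∈ A, ∑ j ∈ B, ∑ k ∈ A, ∑ l ∈ B, f k l i j := by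
  trans ∑ k ∈ A, ∑ i ∈ A, ∑ l ∈ B, ∑ j ∈ B, f k l i j
  · exact Finset.sum_congr rfl fun k _ => Finset.sum_comm
  trans ∑ i ∈ A, ∑ k ∈ A, ∑ l ∈ B, ∑ j ∈ B, f k l i j
  · exact Finset.sum_comm
  refine Finset.sum_congr rfl fun i _ => ?_
  trans ∑ k ∈ A, ∑ j ∈ B, ∑ l ∈ B, f k l i j
  · exact Finset.sum_congr rfl fun k _ => Finset.sum_comm
  exact Finset.sum_comm

lemma charlier_ext (a₁ a₂ : ℝ) (n₁ n₂ k l : ℕ) (x : ℝ) (hk : k ≤ n₁) (hl : l ≤ n₂) :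
    charlier a₁ a₂ k l x =
      ∑ i ∈ Finset.range (n₁ + 1), ∑ j ∈ Finset.range (n₂ + 1),
        (k.choose i : ℝ) * (l.choose j : ℝ) * (-a₁) ^ (k - i) * (-a₂) ^ (l - j) *
          fallingFactorial x (i + j) := by
  rw [charlier]
  have hsub1 : Finset.range (k + 1) ⊆ Finset.range (n₁ + 1) := by
    intro t ht; simp only [Finset.mem_range] at *; omega
  have hsub2 : Finset.range (l + 1) ⊆ Finset.range (n₂ + 1) := by
    intro t ht; simp only [Finset.mem_range] at *; omega
  rw [Finset.sum_subset hsub1 (by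
    intro i _ hi'
    simp only [Finset.mem_range, not_lt] at hi'
    have : k < i := by omega
    simp [Nat.choose_eq_zero_of_lt this])]
  refine Finset.sum_congr rfl fun i _ => ?_
  rw [Finset.sum_subset hsub2 (by
    intro j _ hj'
    simp only [Finset.mem_range, not_lt] at hj'
    have : l < j := by omega
    simp [Nat.choose_eq_zero_of_lt this])]


/-- Inversion formula for the multiple Charlier polynomials. -/
theorem charlier_inversion (a₁ a₂ : ℝ) (n₁ n₂ : ℕ) (x : ℝ) :
    fallingFactorial x (n₁ + n₂) =
      ∑ k ∈ Finset.range (n₁ + 1), ∑ l ∈ Finset.range (n₂ + 1),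
        (n₁.choose k : ℝ) * (n₂.choose l : ℝ) * a₁ ^ (n₁ - k) * a₂ ^ (n₂ - l) *
          charlier a₁ a₂ k l x := by
  set A := Finset.range (n₁ + 1)
  set B := Finset.range (n₂ + 1)
  have step1 :
      ∑ k ∈ A, ∑ l ∈ B,
        (n₁.choose k : ℝ) * (n₂.choose l : ℝ) * a₁ ^ (n₁ - k) * a₂ ^ (n₂ - l) *
          charlier a₁ a₂ k l x
      = ∑ k ∈ A, ∑ l ∈ B, ∑ i ∈ A, ∑ j ∈ B,
          ((n₁.choose k : ℝ) * (k.choose i : ℝ) * (a₁ ^ (n₁ - k) * (-a₁) ^ (k - i))) *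
          ((n₂.choose l : ℝ) * (l.choose j : ℝ) * (a₂ ^ (n₂ - l) * (-a₂) ^ (l - j))) *
          fallingFactorial x (i + j) := by
    refine Finset.sum_congr rfl fun k hk => Finset.sum_congr rfl fun l hl => ?_
    simp only [A, B, Finset.mem_range] at hk hl
    rw [charlier_ext a₁ a₂ n₁ n₂ k l x (by omega) (by omega)]
    rw [Finset.mul_sum]
    refine Finset.sum_congr rfl fun i _ => ?_
    rw [Finset.mul_sum]
    refine Finset.sum_congr rfl fun j _ => ?_
    ring
  rw [step1, swap4]
  have step2 : ∀ i ∈ A, ∀ j ∈ B,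
      ∑ k ∈ A, ∑ l ∈ B,
          ((n₁.choose k : ℝ) * (k.choose i : ℝ) * (a₁ ^ (n₁ - k) * (-a₁) ^ (k - i))) *
          ((n₂.choose l : ℝ) * (l.choose j : ℝ) * (a₂ ^ (n₂ - l) * (-a₂) ^ (l - j))) *
          fallingFactorial x (i + j)
      = (if i = n₁ then 1 else 0) * (if j = n₂ then 1 else 0) * fallingFactorial x (i + j) := by
    intro i _ j _
    rw [← key a₁ n₁ i, ← key a₂ n₂ j, Finset.sum_mul_sum, Finset.sum_mul]
    exact Finset.sum_congr rfl fun k _ => by rw [Finset.sum_mul]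
  rw [Finset.sum_congr rfl fun i hi => Finset.sum_congr rfl fun j hj => step2 i hi j hj]
  simp only [ite_mul, one_mul, zero_mul, Finset.sum_ite_eq', A, B, Finset.mem_range]
  simp
end

section
/- Let a, b, a₁, a₂, b₁, b₂ be real numbers with a₁ + a₂ = a and b₁ + b₂ = b. Then for all natural numbers n₁, n₂ and all real numbers x, y, the addition formula holds: C_{n₁,n₂}^{(a,b)}(x+y) = Σ_{k=0}^{n₁} Σ_{ℓ=0}^{n₂} C(n₁,k) C(n₂,ℓ) C_{k,ℓ}^{(a₁,b₁)}(x) · C_{n₁-k,n₂-ℓ}^{(a₂,b₂)}(y). -/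
lemma ff_succ (x : ℝ) (n : ℕ) :
    fallingFactorial x (n + 1) = x * fallingFactorial (x - 1) n := by
  unfold fallingFactorial
  rw [Finset.prod_range_succ']
  simp only [Nat.cast_zero, sub_zero]
  rw [mul_comm]
  congr 1
  apply Finset.prod_congr rfl
  intro j _
  push_cast
  ring

lemma charlier_symm (a b : ℝ) (n₁ n₂ : ℕ) (x : ℝ) :
    charlier a b n₁ n₂ x = charlier b a n₂ n₁ x := by
  unfold charlier
  rw [Finset.sum_comm]
  apply Finset.sum_congr rfl; intro l _
  apply Finset.sum_congr rfl; intro k _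
  rw [add_comm l k]
  ring

lemma charlier_rec1 (a b : ℝ) (n₁ n₂ : ℕ) (x : ℝ) :
    charlier a b (n₁ + 1) n₂ x =
      -a * charlier a b n₁ n₂ x + x * charlier a b n₁ n₂ (x - 1) := by
  rw [charlier, Finset.sum_range_succ']
  have h1 : ∀ k ∈ Finset.range (n₁ + 1),
      (∑ l ∈ Finset.range (n₂ + 1),
        ((n₁+1).choose (k+1) : ℝ) * (n₂.choose l : ℝ) * (-a) ^ (n₁+1 - (k+1)) * (-b) ^ (n₂ - l) *
          fallingFactorial x (k + 1 + l))
      = (∑ l ∈ Finset.range (n₂ + 1),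
          (n₁.choose k : ℝ) * (n₂.choose l : ℝ) * (-a) ^ (n₁ - k) * (-b) ^ (n₂ - l) *
            (x * fallingFactorial (x-1) (k + l)))
        + (∑ l ∈ Finset.range (n₂ + 1),
          (n₁.choose (k+1) : ℝ) * (n₂.choose l : ℝ) * (-a) ^ (n₁+1 - (k+1)) * (-b) ^ (n₂ - l) *
            fallingFactorial x (k + 1 + l)) := by
    intro k _
    rw [← Finset.sum_add_distrib]
    apply Finset.sum_congr rfl; intro l _
    rw [Nat.choose_succ_succ, Nat.succ_sub_succ]
    have : k + 1 + l = (k + l) + 1 := by omega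
    rw [this, ff_succ]
    push_cast
    ring
  rw [Finset.sum_congr rfl h1, Finset.sum_add_distrib]
  have h2 : (∑ k ∈ Finset.range (n₁ + 1), ∑ l ∈ Finset.range (n₂ + 1),
        (n₁.choose (k+1) : ℝ) * (n₂.choose l : ℝ) * (-a) ^ (n₁+1 - (k+1)) * (-b) ^ (n₂ - l) *
          fallingFactorial x (k + 1 + l))
      + (∑ l ∈ Finset.range (n₂ + 1),
          ((n₁+1).choose 0 : ℝ) * (n₂.choose l : ℝ) * (-a) ^ (n₁+1 - 0) * (-b) ^ (n₂ - l) *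
            fallingFactorial x (0 + l))
      = -a * charlier a b n₁ n₂ x := by
    have := (Finset.sum_range_succ' (fun k => ∑ l ∈ Finset.range (n₂ + 1),
        (n₁.choose k : ℝ) * (n₂.choose l : ℝ) * (-a) ^ (n₁+1 - k) * (-b) ^ (n₂ - l) *
          fallingFactorial x (k + l)) (n₁ + 1)).symm
    simp only [Nat.choose_zero_right, Nat.cast_one] at this ⊢
    rw [this, Finset.sum_range_succ]
    simp only [Nat.choose_succ_self, Nat.cast_zero, zero_mul, Finset.sum_const_zero, add_zero]
    rw [charlier, Finset.mul_sum]
    apply Finset.sum_congr rfl; intro k hk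
    rw [Finset.mul_sum]
    apply Finset.sum_congr rfl; intro l _
    have hk' : n₁ + 1 - k = (n₁ - k) + 1 := by
      simp only [Finset.mem_range] at hk; omega
    rw [hk', pow_succ]
    ring
  rw [add_assoc, h2]
  have h3 : (∑ k ∈ Finset.range (n₁ + 1), ∑ l ∈ Finset.range (n₂ + 1),
        (n₁.choose k : ℝ) * (n₂.choose l : ℝ) * (-a) ^ (n₁ - k) * (-b) ^ (n₂ - l) *
          (x * fallingFactorial (x-1) (k + l)))
      = x * charlier a b n₁ n₂ (x - 1) := by
    rw [charlier, Finset.mul_sum]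
    apply Finset.sum_congr rfl; intro k _
    rw [Finset.mul_sum]
    apply Finset.sum_congr rfl; intro l _
    ring
  rw [h3, add_comm]

noncomputable def rhsum (a₁ b₁ a₂ b₂ : ℝ) (n₁ n₂ : ℕ) (x y : ℝ) : ℝ :=
  ∑ k ∈ Finset.range (n₁ + 1), ∑ l ∈ Finset.range (n₂ + 1),
    (n₁.choose k : ℝ) * (n₂.choose l : ℝ) *
      charlier a₁ b₁ k l x * charlier a₂ b₂ (n₁ - k) (n₂ - l) y

lemma rhsum_symm (a₁ b₁ a₂ b₂ : ℝ) (n₁ n₂ : ℕ) (x y : ℝ) :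
    rhsum a₁ b₁ a₂ b₂ n₁ n₂ x y = rhsum b₁ a₁ b₂ a₂ n₂ n₁ x y := by
  unfold rhsum
  rw [Finset.sum_comm]
  apply Finset.sum_congr rfl; intro l _
  apply Finset.sum_congr rfl; intro k _
  rw [charlier_symm a₁ b₁, charlier_symm a₂ b₂]
  ring

lemma step1 (a b a₁ a₂ b₁ b₂ : ℝ) (ha : a₁ + a₂ = a) (n₁ n₂ : ℕ)
    (IH : ∀ x y : ℝ, charlier a b n₁ n₂ (x + y) = rhsum a₁ b₁ a₂ b₂ n₁ n₂ x y)
    (x y : ℝ) :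
    charlier a b (n₁ + 1) n₂ (x + y) = rhsum a₁ b₁ a₂ b₂ (n₁ + 1) n₂ x y := by
  have lhs : charlier a b (n₁ + 1) n₂ (x + y) =
      -a₁ * rhsum a₁ b₁ a₂ b₂ n₁ n₂ x y + x * rhsum a₁ b₁ a₂ b₂ n₁ n₂ (x - 1) y
      + (-a₂ * rhsum a₁ b₁ a₂ b₂ n₁ n₂ x y + y * rhsum a₁ b₁ a₂ b₂ n₁ n₂ x (y - 1)) := by
    rw [charlier_rec1, IH x y]
    have e1 : x + y - 1 = (x - 1) + y := by ring
    have e2 : x + y - 1 = x + (y - 1) := by ring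
    have h1 : charlier a b n₁ n₂ (x + y - 1) = rhsum a₁ b₁ a₂ b₂ n₁ n₂ (x - 1) y := by
      rw [e1, IH]
    have h2 : charlier a b n₁ n₂ (x + y - 1) = rhsum a₁ b₁ a₂ b₂ n₁ n₂ x (y - 1) := by
      rw [e2, IH]
    calc -a * rhsum a₁ b₁ a₂ b₂ n₁ n₂ x y + (x + y) * charlier a b n₁ n₂ (x + y - 1)
        = -a * rhsum a₁ b₁ a₂ b₂ n₁ n₂ x y + x * charlier a b n₁ n₂ (x + y - 1)
          + y * charlier a b n₁ n₂ (x + y - 1) := by ring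
      _ = _ := by nth_rewrite 1 [h1]; rw [h2, ← ha]; ring
  have rhs : rhsum a₁ b₁ a₂ b₂ (n₁ + 1) n₂ x y =
      -a₁ * rhsum a₁ b₁ a₂ b₂ n₁ n₂ x y + x * rhsum a₁ b₁ a₂ b₂ n₁ n₂ (x - 1) y
      + (-a₂ * rhsum a₁ b₁ a₂ b₂ n₁ n₂ x y + y * rhsum a₁ b₁ a₂ b₂ n₁ n₂ x (y - 1)) := by
    rw [rhsum, Finset.sum_range_succ']
    have h1 : ∀ k ∈ Finset.range (n₁ + 1),
        (∑ l ∈ Finset.range (n₂ + 1),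
          ((n₁+1).choose (k+1) : ℝ) * (n₂.choose l : ℝ) *
            charlier a₁ b₁ (k+1) l x * charlier a₂ b₂ (n₁ + 1 - (k+1)) (n₂ - l) y)
        = (∑ l ∈ Finset.range (n₂ + 1),
            (n₁.choose k : ℝ) * (n₂.choose l : ℝ) *
              (-a₁ * charlier a₁ b₁ k l x + x * charlier a₁ b₁ k l (x - 1)) *
              charlier a₂ b₂ (n₁ - k) (n₂ - l) y)
          + (∑ l ∈ Finset.range (n₂ + 1),
            (n₁.choose (k+1) : ℝ) * (n₂.choose l : ℝ) *
              charlier a₁ b₁ (k+1) l x * charlier a₂ b₂ (n₁ + 1 - (k+1)) (n₂ - l) y) := by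
      intro k _
      rw [← Finset.sum_add_distrib]
      apply Finset.sum_congr rfl; intro l _
      rw [Nat.choose_succ_succ, Nat.succ_sub_succ, ← charlier_rec1]
      push_cast
      ring
    rw [Finset.sum_congr rfl h1, Finset.sum_add_distrib, add_assoc]
    have h2 : (∑ k ∈ Finset.range (n₁ + 1), ∑ l ∈ Finset.range (n₂ + 1),
          (n₁.choose (k+1) : ℝ) * (n₂.choose l : ℝ) *
            charlier a₁ b₁ (k+1) l x * charlier a₂ b₂ (n₁ + 1 - (k+1)) (n₂ - l) y)
        + (∑ l ∈ Finset.range (n₂ + 1),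
            ((n₁+1).choose 0 : ℝ) * (n₂.choose l : ℝ) *
              charlier a₁ b₁ 0 l x * charlier a₂ b₂ (n₁ + 1 - 0) (n₂ - l) y)
        = -a₂ * rhsum a₁ b₁ a₂ b₂ n₁ n₂ x y + y * rhsum a₁ b₁ a₂ b₂ n₁ n₂ x (y - 1) := by
      have := (Finset.sum_range_succ' (fun k => ∑ l ∈ Finset.range (n₂ + 1),
          (n₁.choose k : ℝ) * (n₂.choose l : ℝ) *
            charlier a₁ b₁ k l x * charlier a₂ b₂ (n₁ + 1 - k) (n₂ - l) y) (n₁ + 1)).symm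
      simp only [Nat.choose_zero_right, Nat.cast_one] at this ⊢
      rw [this, Finset.sum_range_succ]
      simp only [Nat.choose_succ_self, Nat.cast_zero, zero_mul, Finset.sum_const_zero, add_zero]
      rw [rhsum, rhsum, Finset.mul_sum, Finset.mul_sum, ← Finset.sum_add_distrib]
      apply Finset.sum_congr rfl; intro k hk
      rw [Finset.mul_sum, Finset.mul_sum, ← Finset.sum_add_distrib]
      apply Finset.sum_congr rfl; intro l _
      have hk' : n₁ + 1 - k = (n₁ - k) + 1 := by
        simp only [Finset.mem_range] at hk; omega
      rw [hk', charlier_rec1]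
      ring
    rw [h2]
    have h3 : (∑ k ∈ Finset.range (n₁ + 1), ∑ l ∈ Finset.range (n₂ + 1),
          (n₁.choose k : ℝ) * (n₂.choose l : ℝ) *
            (-a₁ * charlier a₁ b₁ k l x + x * charlier a₁ b₁ k l (x - 1)) *
            charlier a₂ b₂ (n₁ - k) (n₂ - l) y)
        = -a₁ * rhsum a₁ b₁ a₂ b₂ n₁ n₂ x y + x * rhsum a₁ b₁ a₂ b₂ n₁ n₂ (x - 1) y := by
      rw [rhsum, rhsum, Finset.mul_sum, Finset.mul_sum, ← Finset.sum_add_distrib]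
      apply Finset.sum_congr rfl; intro k _
      rw [Finset.mul_sum, Finset.mul_sum, ← Finset.sum_add_distrib]
      apply Finset.sum_congr rfl; intro l _
      ring
    rw [h3]
  rw [lhs, rhs]

lemma main_aux (a b a₁ a₂ b₁ b₂ : ℝ) (ha : a₁ + a₂ = a) (hb : b₁ + b₂ = b) :
    ∀ n₁ n₂ : ℕ, ∀ x y : ℝ,
      charlier a b n₁ n₂ (x + y) = rhsum a₁ b₁ a₂ b₂ n₁ n₂ x y := by
  intro n₁
  induction n₁ with
  | zero =>
    intro n₂
    induction n₂ with
    | zero =>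
      intro x y
      simp [charlier, rhsum, fallingFactorial]
    | succ n₂ ih =>
      intro x y
      rw [charlier_symm, rhsum_symm]
      have IH' : ∀ x y : ℝ, charlier b a n₂ 0 (x + y) = rhsum b₁ a₁ b₂ a₂ n₂ 0 x y := by
        intro x y
        rw [← charlier_symm, ← rhsum_symm, ih x y]
      exact step1 b a b₁ b₂ a₁ a₂ hb n₂ 0 IH' x y
  | succ n₁ ih =>
    intro n₂ x y
    exact step1 a b a₁ a₂ b₁ b₂ ha n₁ n₂ (fun x y => ih n₂ x y) x y

/-- Addition formula for the multiple Charlier polynomials. -/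
theorem charlier_addition (a b a₁ a₂ b₁ b₂ : ℝ) (ha : a₁ + a₂ = a) (hb : b₁ + b₂ = b)
    (n₁ n₂ : ℕ) (x y : ℝ) :
    charlier a b n₁ n₂ (x + y) =
      ∑ k ∈ Finset.range (n₁ + 1), ∑ l ∈ Finset.range (n₂ + 1),
        (n₁.choose k : ℝ) * (n₂.choose l : ℝ) *
          charlier a₁ b₁ k l x * charlier a₂ b₂ (n₁ - k) (n₂ - l) y := by
  exact main_aux a b a₁ a₂ b₁ b₂ ha hb n₁ n₂ x y
end

section
/- For all real numbers a₁, a₂, all natural numbers n₁, n₂, and every real number x, the nearest-neighbor recurrence x · C_{n₁,n₂}^{(a₁,a₂)}(x) = C_{n₁+1,n₂}^{(a₁,a₂)}(x) + (a₁ + n₁ + n₂) · C_{n₁,n₂}^{(a₁,a₂)}(x) + a₁n₁ · C_{n₁-1,n₂}^{(a₁,a₂)}(x) + a₂n₂ · C_{n₁,n₂-1}^{(a₁,a₂)}(x) holds, where a term whose index would be negative is zero (its coefficient n_i vanishes). -/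
/-- Generic weighted binomial sum. -/
noncomputable def W (n : ℕ) (a : ℝ) (g : ℕ → ℝ) : ℝ :=
  ∑ k ∈ Finset.range (n + 1), (n.choose k : ℝ) * (-a) ^ (n - k) * g k

lemma charlier_eq_W (a₁ a₂ : ℝ) (n₁ n₂ : ℕ) (x : ℝ) :
    charlier a₁ a₂ n₁ n₂ x
      = W n₁ a₁ (fun k => W n₂ a₂ (fun l => fallingFactorial x (k + l))) := by
  unfold charlier W
  refine Finset.sum_congr rfl fun k _ => ?_
  rw [Finset.mul_sum]
  exact Finset.sum_congr rfl fun l _ => by ring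

lemma W_add_smul (n : ℕ) (a c d : ℝ) (g h : ℕ → ℝ) :
    W n a (fun k => c * g k + d * h k) = c * W n a g + d * W n a h := by
  unfold W
  rw [Finset.mul_sum, Finset.mul_sum, ← Finset.sum_add_distrib]
  exact Finset.sum_congr rfl fun k _ => by ring

lemma W_succ (n : ℕ) (a : ℝ) (g : ℕ → ℝ) :
    W (n+1) a g = -a * W n a g + W n a (fun k => g (k+1)) := by
  unfold W
  rw [Finset.sum_range_succ']
  have hsplit : ∀ k ∈ Finset.range (n+1),
      ((n+1).choose (k+1) : ℝ) * (-a) ^ (n + 1 - (k+1)) * g (k+1)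
        = (n.choose (k+1) : ℝ) * (-a) ^ (n - k) * g (k+1)
          + (n.choose k : ℝ) * (-a) ^ (n - k) * g (k+1) := by
    intro k _
    have h : ((n+1).choose (k+1) : ℝ) = (n.choose k : ℝ) + (n.choose (k+1) : ℝ) := by
      exact_mod_cast congrArg (Nat.cast : ℕ → ℝ) (Nat.choose_succ_succ n k)
    rw [Nat.add_sub_add_right, h]
    ring
  rw [Finset.sum_congr rfl hsplit, Finset.sum_add_distrib]
  have hbr : (∑ k ∈ Finset.range (n+1), (n.choose (k+1) : ℝ) * (-a) ^ (n - k) * g (k+1))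
        + ((n+1).choose 0 : ℝ) * (-a) ^ (n + 1 - 0) * g 0
      = -a * ∑ k ∈ Finset.range (n+1), (n.choose k : ℝ) * (-a) ^ (n - k) * g k := by
    have h1 : -a * ∑ k ∈ Finset.range (n+1), (n.choose k : ℝ) * (-a) ^ (n - k) * g k
        = ∑ k ∈ Finset.range (n+1), (n.choose k : ℝ) * (-a) ^ (n + 1 - k) * g k := by
      rw [Finset.mul_sum]
      refine Finset.sum_congr rfl fun k hk => ?_
      have hk' : k ≤ n := Nat.lt_succ_iff.mp (Finset.mem_range.mp hk)
      rw [show n + 1 - k = (n - k) + 1 from by omega]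
      ring
    have h2 : ∑ k ∈ Finset.range (n+2), (n.choose k : ℝ) * (-a) ^ (n + 1 - k) * g k
        = ∑ k ∈ Finset.range (n+1), (n.choose k : ℝ) * (-a) ^ (n + 1 - k) * g k := by
      rw [Finset.sum_range_succ (fun k => (n.choose k : ℝ) * (-a) ^ (n + 1 - k) * g k) (n+1)]
      simp [Nat.choose_succ_self]
    have h3 : ∑ k ∈ Finset.range (n+2), (n.choose k : ℝ) * (-a) ^ (n + 1 - k) * g k
        = (∑ k ∈ Finset.range (n+1), (n.choose (k+1) : ℝ) * (-a) ^ (n - k) * g (k+1))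
          + (n.choose 0 : ℝ) * (-a) ^ (n + 1) * g 0 := by
      rw [Finset.sum_range_succ']
      congr 1
      refine Finset.sum_congr rfl fun k _ => ?_
      rw [Nat.add_sub_add_right]
    rw [h1, ← h2, h3]
    simp
  simp only []
  linear_combination hbr

lemma W_deriv (n : ℕ) (a : ℝ) (g : ℕ → ℝ) :
    ∑ k ∈ Finset.range (n+1), (k:ℝ) * (n.choose k : ℝ) * (-a) ^ (n - k) * g k
      = n * W n a g + a * n * W (n-1) a g := by
  cases n with
  | zero => simp [W]
  | succ m =>
    rw [Finset.sum_range_succ']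
    have hterm : ∀ k ∈ Finset.range (m+1),
        ((k+1 : ℕ):ℝ) * ((m+1).choose (k+1) : ℝ) * (-a) ^ (m + 1 - (k+1)) * g (k+1)
          = (m+1 : ℝ) * ((m.choose k : ℝ) * (-a) ^ (m - k) * g (k+1)) := by
      intro k _
      have h' : ((m+1 : ℕ):ℝ) * (m.choose k : ℝ)
          = ((m+1).choose (k+1) : ℝ) * ((k+1 : ℕ):ℝ) := by
        exact_mod_cast congrArg (Nat.cast : ℕ → ℝ) (Nat.add_one_mul_choose_eq m k)
      rw [Nat.add_sub_add_right]
      push_cast at h' ⊢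
      linear_combination (-((-a) ^ (m - k) * g (k + 1))) * h'
    rw [Finset.sum_congr rfl hterm, ← Finset.mul_sum]
    have h0 : (∑ k ∈ Finset.range (m+1), (m.choose k : ℝ) * (-a) ^ (m - k) * g (k+1))
        = W m a (fun k => g (k+1)) := rfl
    rw [h0]
    have hs := W_succ m a g
    simp only [Nat.add_sub_cancel, Nat.cast_zero, zero_mul, add_zero]
    push_cast
    rw [hs]
    ring

/-- The nearest-neighbor recurrence `x C_{n₁,n₂} = C_{n₁+1,n₂} + (a₁+n₁+n₂) C_{n₁,n₂}
  + a₁n₁ C_{n₁-1,n₂} + a₂n₂ C_{n₁,n₂-1}`; a term whose index would be negative is zero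
  since its coefficient `nᵢ` vanishes. -/
theorem charlier_nearest_neighbor_recurrence (a₁ a₂ : ℝ) (n₁ n₂ : ℕ) (x : ℝ) :
    x * charlier a₁ a₂ n₁ n₂ x =
      charlier a₁ a₂ (n₁ + 1) n₂ x
        + (a₁ + n₁ + n₂) * charlier a₁ a₂ n₁ n₂ x
        + a₁ * n₁ * charlier a₁ a₂ (n₁ - 1) n₂ x
        + a₂ * n₂ * charlier a₁ a₂ n₁ (n₂ - 1) x := by
  have hx : ∀ m : ℕ, x * fallingFactorial x m
      = fallingFactorial x (m+1) + (m:ℝ) * fallingFactorial x m := by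
    intro m
    unfold fallingFactorial
    rw [Finset.prod_range_succ]
    ring
  set A := W n₁ a₁ (fun k => W n₂ a₂ (fun l => fallingFactorial x (k + l))) with hA
  set B := W n₁ a₁ (fun k => W n₂ a₂ (fun l => fallingFactorial x (k + l + 1))) with hB
  set D := W (n₁-1) a₁ (fun k => W n₂ a₂ (fun l => fallingFactorial x (k + l))) with hD
  set E := W n₁ a₁ (fun k => W (n₂-1) a₂ (fun l => fallingFactorial x (k + l))) with hE
  have hC : charlier a₁ a₂ n₁ n₂ x = A := charlier_eq_W a₁ a₂ n₁ n₂ x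
  have hCD : charlier a₁ a₂ (n₁-1) n₂ x = D := charlier_eq_W a₁ a₂ (n₁-1) n₂ x
  have hCE : charlier a₁ a₂ n₁ (n₂-1) x = E := charlier_eq_W a₁ a₂ n₁ (n₂-1) x
  have hshift : W n₁ a₁ (fun k => W n₂ a₂ (fun l => fallingFactorial x ((k+1) + l))) = B := by
    rw [hB]
    unfold W
    refine Finset.sum_congr rfl fun k _ => ?_
    congr 1
    refine Finset.sum_congr rfl fun l _ => ?_
    simp only [show k+1+l = k+l+1 from by omega]
  have hCB : charlier a₁ a₂ (n₁+1) n₂ x = -a₁ * A + B := by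
    rw [charlier_eq_W, W_succ, hshift, ← hA]
  have hin : ∀ k : ℕ, ∑ l ∈ Finset.range (n₂+1),
        (l:ℝ) * (n₂.choose l : ℝ) * (-a₂) ^ (n₂ - l) * fallingFactorial x (k + l)
      = (n₂:ℝ) * W n₂ a₂ (fun l => fallingFactorial x (k + l))
        + a₂ * n₂ * W (n₂-1) a₂ (fun l => fallingFactorial x (k + l)) :=
    fun k => W_deriv n₂ a₂ (fun l => fallingFactorial x (k + l))
  have hL : x * A = B
      + ((n₁:ℝ) * A + a₁ * n₁ * D)
      + ((n₂:ℝ) * A + a₂ * n₂ * E) := by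
    have step1 : x * A = B
        + (∑ k ∈ Finset.range (n₁+1), (k:ℝ) * (n₁.choose k : ℝ) * (-a₁) ^ (n₁ - k)
            * W n₂ a₂ (fun l => fallingFactorial x (k + l)))
        + W n₁ a₁ (fun k => ∑ l ∈ Finset.range (n₂+1),
            (l:ℝ) * (n₂.choose l : ℝ) * (-a₂) ^ (n₂ - l) * fallingFactorial x (k + l)) := by
      rw [hA, hB]
      unfold W
      simp only [Finset.mul_sum, ← Finset.sum_add_distrib]
      refine Finset.sum_congr rfl fun k _ => ?_
      refine Finset.sum_congr rfl fun l _ => ?_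
      have h := hx (k + l)
      push_cast at h ⊢
      linear_combination ((n₁.choose k : ℝ) * (-a₁) ^ (n₁ - k)
        * ((n₂.choose l : ℝ) * (-a₂) ^ (n₂ - l))) * h
    rw [step1]
    congr 1
    · congr 1
      rw [hA, hD]
      exact W_deriv n₁ a₁ (fun k => W n₂ a₂ (fun l => fallingFactorial x (k + l)))
    · have h4 : W n₁ a₁ (fun k => ∑ l ∈ Finset.range (n₂+1),
            (l:ℝ) * (n₂.choose l : ℝ) * (-a₂) ^ (n₂ - l) * fallingFactorial x (k + l))
          = W n₁ a₁ (fun k => (n₂:ℝ) * W n₂ a₂ (fun l => fallingFactorial x (k + l))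
              + (a₂ * n₂) * W (n₂-1) a₂ (fun l => fallingFactorial x (k + l))) :=
        congrArg (W n₁ a₁) (funext fun k => by rw [hin k])
      rw [h4, W_add_smul, hA, hE]
  rw [hC, hCD, hCE, hCB, hL]
  ring
end

section
/- Let r ≥ 1, let a : Fin r → ℝ, and let x be a natural number. For every t : Fin r → ℝ, the family (n ↦ C_n^{(a)}(x) · ∏_{i=1}^{r} t_i^{n_i}/n_i!) indexed by multi-indices n ∈ ℕ^r is summable and its sum equals exp(-Σ_{i=1}^{r} a_i t_i) · (1 + Σ_{i=1}^{r} t_i)^x. -/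
/-- The multiple Charlier polynomial `C_n^{(a)}(x)` for a multi-index `n : Fin r → ℕ`
and parameters `a : Fin r → ℝ`. -/
noncomputable def mcharlier {r : ℕ} (a : Fin r → ℝ) (n : Fin r → ℕ) (x : ℝ) : ℝ :=
  ∑ k ∈ Fintype.piFinset (fun i => Finset.range (n i + 1)),
    (∏ i, ((n i).choose (k i) : ℝ) * (-a i) ^ (n i - k i)) * fallingFactorial x (∑ i, k i)

/-! ### Auxiliary lemmas -/

lemma fallingFactorial_natCast (x : ℕ) :
    ∀ n : ℕ, fallingFactorial (x : ℝ) n = (x.descFactorial n : ℝ) := by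
  intro n
  induction n with
  | zero => simp [fallingFactorial]
  | succ n ih =>
    rw [fallingFactorial, Finset.prod_range_succ, ← fallingFactorial, ih,
      Nat.descFactorial_succ, Nat.cast_mul]
    rcases le_or_gt n x with h | h
    · rw [Nat.cast_sub h]; ring
    · rw [Nat.descFactorial_eq_zero_iff_lt.2 h]; simp

lemma fallingFactorial_eq_zero (x n : ℕ) (h : x < n) : fallingFactorial (x : ℝ) n = 0 := by
  rw [fallingFactorial_natCast, Nat.descFactorial_eq_zero_iff_lt.2 h, Nat.cast_zero]

lemma pi_summable_tsum : ∀ (r : ℕ) (g : Fin r → ℕ → ℝ), (∀ i, Summable fun n => ‖g i n‖) →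
    (Summable fun n : Fin r → ℕ => ‖∏ i, g i (n i)‖) ∧
    ∑' n : Fin r → ℕ, ∏ i, g i (n i) = ∏ i, ∑' m : ℕ, g i m := by
  intro r
  induction r with
  | zero =>
    intro g hg
    constructor
    · exact (hasSum_sum_of_ne_finset_zero (s := {(default : Fin 0 → ℕ)})
        (by intro b hb; exact absurd (Finset.mem_singleton.2 (Subsingleton.elim b default)) hb)).summable
    · rw [tsum_eq_sum (s := {(default : Fin 0 → ℕ)})
        (by intro b hb; exact absurd (Finset.mem_singleton.2 (Subsingleton.elim b default)) hb)]
      simp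
  | succ r ih =>
    intro g hg
    set e := Fin.consEquiv (fun _ : Fin (r + 1) => ℕ) with he
    have ihr := ih (fun i => g i.succ) (fun i => hg i.succ)
    have hmul : Summable fun p : ℕ × (Fin r → ℕ) => ‖g 0 p.1 * ∏ i, g i.succ (p.2 i)‖ := by
      apply Summable.mul_norm (hg 0) ihr.1
    have key : ∀ p : ℕ × (Fin r → ℕ), ∏ i, g i (e p i) = g 0 p.1 * ∏ i, g i.succ (p.2 i) := by
      intro p
      rw [Fin.prod_univ_succ]
      simp [he]
    constructor
    · rw [← e.summable_iff]
      exact hmul.congr fun p => by rw [Function.comp_apply, key p]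
    · rw [← e.tsum_eq]
      rw [show (fun p : ℕ × (Fin r → ℕ) => ∏ i, g i (e p i)) = fun p => g 0 p.1 * ∏ i, g i.succ (p.2 i)
        from funext key]
      have hprod := tsum_mul_tsum_of_summable_norm (hg 0) ihr.1
      rw [← hprod, ihr.2, Fin.prod_univ_succ]

lemma tsum_pow_div_factorial_eq_exp (y : ℝ) : ∑' n : ℕ, y ^ n / (n.factorial : ℝ) = Real.exp y := by
  rw [Real.exp_eq_exp_ℝ, NormedSpace.exp_eq_tsum_div]

lemma summable_norm_pow_div_factorial (c : ℝ) :
    Summable fun n : ℕ => ‖c ^ n / (n.factorial : ℝ)‖ := by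
  have := Real.summable_pow_div_factorial |c|
  refine this.congr fun n => ?_
  rw [norm_div, norm_pow, Real.norm_eq_abs, Real.norm_natCast]

lemma exp_pi (r : ℕ) (c : Fin r → ℝ) :
    (Summable fun m : Fin r → ℕ => ‖∏ i, c i ^ m i / ((m i).factorial : ℝ)‖) ∧
    ∑' m : Fin r → ℕ, ∏ i, c i ^ m i / ((m i).factorial : ℝ) = Real.exp (∑ i, c i) := by
  have h := pi_summable_tsum r (fun i n => c i ^ n / (n.factorial : ℝ))
    (fun i => summable_norm_pow_div_factorial (c i))
  refine ⟨h.1, ?_⟩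
  rw [h.2, Real.exp_sum]
  exact Finset.prod_congr rfl fun i _ => tsum_pow_div_factorial_eq_exp (c i)

lemma coord_identity (a t : ℝ) (n k : ℕ) (h : k ≤ n) :
    (-(a * t)) ^ (n - k) / ((n - k).factorial : ℝ) * (t ^ k / (k.factorial : ℝ)) =
      ((n.choose k : ℝ) * (-a) ^ (n - k)) * (t ^ n / (n.factorial : ℝ)) := by
  have hn : ((n.choose k : ℝ)) * (k.factorial : ℝ) * (((n - k).factorial : ℝ)) = (n.factorial : ℝ) := by
    exact_mod_cast Nat.choose_mul_factorial_mul_factorial h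
  have h1 : (-(a * t)) ^ (n - k) = (-a) ^ (n - k) * t ^ (n - k) := by
    rw [show -(a * t) = (-a) * t by ring, mul_pow]
  have h2 : t ^ (n - k) * t ^ k = t ^ n := by rw [← pow_add, Nat.sub_add_cancel h]
  have hf1 : ((n - k).factorial : ℝ) ≠ 0 := Nat.cast_ne_zero.2 (Nat.factorial_ne_zero _)
  have hf2 : ((k).factorial : ℝ) ≠ 0 := Nat.cast_ne_zero.2 (Nat.factorial_ne_zero _)
  have hf3 : ((n).factorial : ℝ) ≠ 0 := Nat.cast_ne_zero.2 (Nat.factorial_ne_zero _)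
  field_simp [h1]
  linear_combination ((-a) ^ (n - k) * t ^ n) * hn.symm + ((-a) ^ (n - k) * (n.factorial : ℝ)) * h2

section vsum
variable (r x : ℕ) (t : Fin r → ℝ)

noncomputable def vfun (k : Fin r → ℕ) : ℝ :=
  fallingFactorial (x : ℝ) (∑ i, k i) * ∏ i, t i ^ k i / ((k i).factorial : ℝ)

lemma vfun_vanish : ∀ k ∉ Fintype.piFinset (fun _ : Fin r => Finset.range (x + 1)),
    vfun r x t k = 0 := by
  intro k hk
  rw [Fintype.mem_piFinset] at hk
  push_neg at hk
  obtain ⟨i, hi⟩ := hk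
  rw [Finset.mem_range, not_lt] at hi
  have hle : k i ≤ ∑ j, k j := Finset.single_le_sum (fun j _ => Nat.zero_le _) (Finset.mem_univ i)
  have : x < ∑ j, k j := lt_of_lt_of_le (Nat.lt_of_succ_le hi) hle
  rw [vfun, fallingFactorial_eq_zero _ _ this, zero_mul]

lemma vfun_summable_norm : Summable fun k : Fin r → ℕ => ‖vfun r x t k‖ :=
  summable_of_ne_finset_zero (s := Fintype.piFinset (fun _ : Fin r => Finset.range (x + 1)))
    (fun k hk => by rw [vfun_vanish r x t k hk, norm_zero])

lemma vfun_tsum : ∑' k : Fin r → ℕ, vfun r x t k = (1 + ∑ i, t i) ^ x := by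
  classical
  rw [tsum_eq_sum (vfun_vanish r x t)]
  set B : Finset (Fin r → ℕ) := (Finset.range (x + 1)).biUnion
    (fun s => Finset.piAntidiag Finset.univ s) with hB
  have hBK : B ⊆ Fintype.piFinset (fun _ : Fin r => Finset.range (x + 1)) := by
    intro k hk
    rw [hB, Finset.mem_biUnion] at hk
    obtain ⟨s, hs, hks⟩ := hk
    rw [Finset.mem_piAntidiag] at hks
    rw [Fintype.mem_piFinset]
    intro i
    rw [Finset.mem_range, Nat.lt_succ_iff]
    calc k i ≤ ∑ j, k j := Finset.single_le_sum (fun j _ => Nat.zero_le _) (Finset.mem_univ i)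
    _ = s := hks.1
    _ ≤ x := Nat.lt_succ_iff.mp (Finset.mem_range.mp hs)
  have hdisj : (↑(Finset.range (x + 1)) : Set ℕ).PairwiseDisjoint
      (fun s => Finset.piAntidiag (Finset.univ : Finset (Fin r)) s) := by
    intro s hs s' hs' hss
    apply Finset.disjoint_left.2
    intro k hk hk'
    rw [Finset.mem_piAntidiag] at hk hk'
    exact hss (hk.1 ▸ hk'.1 ▸ rfl)
  rw [← Finset.sum_subset hBK (fun k hk hkB => ?_)]
  · -- sum over B
    rw [hB, Finset.sum_biUnion hdisj]
    have inner : ∀ s ∈ Finset.range (x + 1),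
        ∑ k ∈ Finset.piAntidiag (Finset.univ : Finset (Fin r)) s, vfun r x t k
        = (x.choose s : ℝ) * (∑ i, t i) ^ s := by
      intro s hs
      have hmulti : ∀ k ∈ Finset.piAntidiag (Finset.univ : Finset (Fin r)) s,
          vfun r x t k = (x.choose s : ℝ) *
            ((Nat.multinomial Finset.univ k : ℝ) * ∏ i, t i ^ k i) := by
        intro k hk
        rw [Finset.mem_piAntidiag] at hk
        have hsk : ∑ i, k i = s := hk.1
        have hspec : ((∏ i, ((k i).factorial : ℝ)) * (Nat.multinomial Finset.univ k : ℝ))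
            = (s.factorial : ℝ) := by
          rw [← hsk]
          exact_mod_cast Nat.multinomial_spec Finset.univ k
        have hff : fallingFactorial (x : ℝ) s = (s.factorial : ℝ) * (x.choose s : ℝ) := by
          rw [fallingFactorial_natCast]
          exact_mod_cast congrArg (Nat.cast : ℕ → ℝ)
            (Nat.descFactorial_eq_factorial_mul_choose x s)
        have hfne : (∏ i, ((k i).factorial : ℝ)) ≠ 0 := by
          apply Finset.prod_ne_zero_iff.2
          intro i _
          exact Nat.cast_ne_zero.2 (Nat.factorial_ne_zero _)
        rw [vfun, hsk, hff, Finset.prod_div_distrib]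
        have hinv := mul_inv_cancel₀ hfne
        linear_combination
          (-((x.choose s : ℝ) * ((∏ i, t i ^ k i) / ∏ i, ((k i).factorial : ℝ)))) * hspec
          + ((x.choose s : ℝ) * (∏ i, t i ^ k i) * (Nat.multinomial Finset.univ k : ℝ)) * hinv
      rw [Finset.sum_congr rfl hmulti, ← Finset.mul_sum]
      congr 1
      rw [← Finset.sum_pow_eq_sum_piAntidiag Finset.univ t s]
    rw [Finset.sum_congr rfl inner]
    rw [add_comm (1 : ℝ), add_pow]
    refine Finset.sum_congr rfl fun s hs => ?_
    simp [mul_comm]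
  · -- vanish on K \ B
    have : x < ∑ i, k i := by
      by_contra hle
      push_neg at hle
      apply hkB
      rw [hB, Finset.mem_biUnion]
      exact ⟨∑ i, k i, Finset.mem_range.2 (Nat.lt_succ_of_le hle),
        Finset.mem_piAntidiag.2 ⟨rfl, fun i _ => Finset.mem_univ i⟩⟩
    rw [vfun, fallingFactorial_eq_zero _ _ this, zero_mul]

end vsum

/-- Generating function for the multiple Charlier polynomials:
`e^{-∑ aᵢtᵢ} (1+∑ tᵢ)^x = ∑_n C_n^{(a)}(x) ∏ tᵢ^{nᵢ}/nᵢ!`. -/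
theorem mcharlier_generatingFunction (r : ℕ) (hr : 1 ≤ r) (a : Fin r → ℝ) (x : ℕ)
    (t : Fin r → ℝ) :
    Summable (fun n : Fin r → ℕ =>
      mcharlier a n (x : ℝ) * ∏ i, t i ^ n i / ((n i).factorial : ℝ)) ∧
    ∑' n : Fin r → ℕ, mcharlier a n (x : ℝ) * ∏ i, t i ^ n i / ((n i).factorial : ℝ) =
      Real.exp (-∑ i, a i * t i) * (1 + ∑ i, t i) ^ x := by
  classical
  set u : (Fin r → ℕ) → ℝ :=
    fun m => ∏ i, (-(a i * t i)) ^ m i / ((m i).factorial : ℝ) with hu_def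
  have hu := exp_pi r (fun i => -(a i * t i))
  have hu_norm : Summable fun m : Fin r → ℕ => ‖u m‖ := hu.1
  have hu_tsum : ∑' m : Fin r → ℕ, u m = Real.exp (-∑ i, a i * t i) := by
    rw [hu_def, hu.2]
    congr 1
    rw [← Finset.sum_neg_distrib]
  have hv_norm := vfun_summable_norm r x t
  have hv_tsum := vfun_tsum r x t
  -- the product function on pairs
  have hH : Summable fun p : (Fin r → ℕ) × (Fin r → ℕ) => u p.1 * vfun r x t p.2 := by
    apply summable_mul_of_summable_norm hu_norm hv_norm
  have hHt := tsum_mul_tsum_of_summable_norm hu_norm hv_norm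
  -- reindexing
  set G : (Fin r → ℕ) × (Fin r → ℕ) → ℝ :=
    fun p => if ∀ i, p.2 i ≤ p.1 i then u (p.1 - p.2) * vfun r x t p.2 else 0 with hG_def
  set φ : (Fin r → ℕ) × (Fin r → ℕ) → (Fin r → ℕ) × (Fin r → ℕ) :=
    fun p => (p.1 + p.2, p.2) with hφ_def
  have hφ : Function.Injective φ := by
    intro p q h
    rw [hφ_def, Prod.mk.injEq] at h
    obtain ⟨h1, h2⟩ := h
    have h1' : p.1 = q.1 := by
      funext i
      have := congrFun h1 i
      have h2i := congrFun h2 i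
      simp only [Pi.add_apply] at this
      omega
    exact Prod.ext h1' h2
  have hGφ : ∀ p : (Fin r → ℕ) × (Fin r → ℕ), G (φ p) = u p.1 * vfun r x t p.2 := by
    intro p
    rw [hG_def, hφ_def]
    simp only
    have hcond : ∀ i, p.2 i ≤ (p.1 + p.2) i := fun i => by
      simp only [Pi.add_apply]; exact Nat.le_add_left _ _
    rw [if_pos hcond]
    congr 1
    congr 1
    funext i
    simp [Nat.add_sub_cancel]
  have hGrange : ∀ p ∉ Set.range φ, G p = 0 := by
    intro p hp
    rw [hG_def]
    simp only
    rw [if_neg]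
    intro h
    apply hp
    refine ⟨(p.1 - p.2, p.2), ?_⟩
    rw [hφ_def]
    simp only
    refine Prod.ext ?_ rfl
    funext i
    simp only [Pi.add_apply, Pi.sub_apply]
    exact Nat.sub_add_cancel (h i)
  have hGcomp : ∀ p, (G ∘ φ) p = u p.1 * vfun r x t p.2 := fun p => hGφ p
  have hG : Summable G := (hφ.summable_iff hGrange).1 (hH.congr fun p => (hGcomp p).symm)
  have hG_tsum : ∑' p, G p = (∑' m, u m) * ∑' k, vfun r x t k := by
    rw [← hφ.tsum_eq (Function.support_subset_iff'.2 hGrange)]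
    rw [tsum_congr hGφ, ← hHt]
  -- fiberwise sums
  have hfib : ∀ n : Fin r → ℕ, HasSum (fun k => G (n, k))
      (mcharlier a n (x : ℝ) * ∏ i, t i ^ n i / ((n i).factorial : ℝ)) := by
    intro n
    have hvan : ∀ k ∉ Fintype.piFinset (fun i => Finset.range (n i + 1)), G (n, k) = 0 := by
      intro k hk
      rw [Fintype.mem_piFinset] at hk
      push_neg at hk
      obtain ⟨i, hi⟩ := hk
      rw [Finset.mem_range, not_lt] at hi
      rw [hG_def]
      simp only
      rw [if_neg]
      intro h
      exact absurd (h i) (by omega)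
    have hsum : HasSum (fun k => G (n, k))
        (∑ k ∈ Fintype.piFinset (fun i => Finset.range (n i + 1)), G (n, k)) :=
      hasSum_sum_of_ne_finset_zero hvan
    have heq : ∑ k ∈ Fintype.piFinset (fun i => Finset.range (n i + 1)), G (n, k) =
        mcharlier a n (x : ℝ) * ∏ i, t i ^ n i / ((n i).factorial : ℝ) := by
      rw [mcharlier, Finset.sum_mul]
      refine Finset.sum_congr rfl fun k hk => ?_
      rw [Fintype.mem_piFinset] at hk
      have hkn : ∀ i, k i ≤ n i := fun i => Nat.lt_succ_iff.mp (Finset.mem_range.mp (hk i))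
      rw [hG_def]
      simp only
      rw [if_pos hkn, vfun]
      have hsub : ∀ i, ((n, k).1 - (n, k).2) i = n i - k i := fun i => rfl
      have huval : u ((n, k).1 - (n, k).2) =
          ∏ i, (-(a i * t i)) ^ (n i - k i) / ((n i - k i).factorial : ℝ) := by
        rw [hu_def]
        rfl
      rw [huval]
      have key : (∏ i, (-(a i * t i)) ^ (n i - k i) / ((n i - k i).factorial : ℝ)) *
          (∏ i, t i ^ k i / ((k i).factorial : ℝ)) =
          (∏ i, ((n i).choose (k i) : ℝ) * (-a i) ^ (n i - k i)) *
          ∏ i, t i ^ n i / ((n i).factorial : ℝ) := by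
        rw [← Finset.prod_mul_distrib, ← Finset.prod_mul_distrib]
        exact Finset.prod_congr rfl fun i _ => coord_identity (a i) (t i) (n i) (k i) (hkn i)
      calc (∏ i, (-(a i * t i)) ^ (n i - k i) / ((n i - k i).factorial : ℝ)) *
          (fallingFactorial (x : ℝ) (∑ i, k i) * ∏ i, t i ^ k i / ((k i).factorial : ℝ))
          = ((∏ i, (-(a i * t i)) ^ (n i - k i) / ((n i - k i).factorial : ℝ)) *
            (∏ i, t i ^ k i / ((k i).factorial : ℝ))) * fallingFactorial (x : ℝ) (∑ i, k i) := by
            ring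
        _ = ((∏ i, ((n i).choose (k i) : ℝ) * (-a i) ^ (n i - k i)) *
            ∏ i, t i ^ n i / ((n i).factorial : ℝ)) * fallingFactorial (x : ℝ) (∑ i, k i) := by
            rw [key]
        _ = (∏ i, ((n i).choose (k i) : ℝ) * (-a i) ^ (n i - k i)) *
            fallingFactorial (x : ℝ) (∑ i, k i) * ∏ i, t i ^ n i / ((n i).factorial : ℝ) := by
            ring
    rw [heq] at hsum
    exact hsum
  have hmain : HasSum (fun n : Fin r → ℕ =>
      mcharlier a n (x : ℝ) * ∏ i, t i ^ n i / ((n i).factorial : ℝ)) (∑' p, G p) := by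
    apply HasSum.prod_fiberwise hG.hasSum hfib
  refine ⟨hmain.summable, ?_⟩
  rw [hmain.tsum_eq, hG_tsum, hu_tsum, hv_tsum]
end

section
/- Let r ≥ 1 and a : Fin r → ℝ. For every multi-index n ∈ ℕ^r with |n| = n₁ + ⋯ + n_r and every real number x, the inversion formula holds: x^{(|n|)} = Σ_{k₁=0}^{n₁} ⋯ Σ_{k_r=0}^{n_r} (∏_{i=1}^{r} C(n_i,k_i) a_i^{n_i-k_i}) C_k^{(a)}(x). -/
lemma mcharlier_zero_sum (a : ℝ) (N : ℕ) :
    ∑ j ∈ Finset.range (N + 1), (N.choose j : ℝ) * a ^ (N - j) * (-a) ^ j =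
      if N = 0 then 1 else 0 := by
  have h := add_pow (-a) a N
  simp only [neg_add_cancel, zero_pow_eq] at h
  rw [eq_comm, h]
  apply Finset.sum_congr rfl
  intro j hj
  ring

lemma mcharlier_key (a : ℝ) (n m : ℕ) :
    ∑ k ∈ Finset.range (n + 1),
      (n.choose k : ℝ) * a ^ (n - k) * ((k.choose m : ℝ) * (-a) ^ (k - m)) =
      if n = m then 1 else 0 := by
  rcases le_or_gt m n with h | h
  · have hsub : Finset.Icc m n ⊆ Finset.range (n + 1) := by
      intro k hk
      simp only [Finset.mem_Icc] at hk
      simp only [Finset.mem_range]; omega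
    rw [← Finset.sum_subset hsub (by
      intro k hk hk'
      simp only [Finset.mem_Icc, Finset.mem_range] at hk hk'
      have : k < m := by omega
      rw [Nat.choose_eq_zero_of_lt this]
      simp)]
    have hIcc : Finset.Icc m n =
        Finset.map ⟨fun j => m + j, add_right_injective m⟩ (Finset.range (n - m + 1)) := by
      ext k
      simp only [Finset.mem_Icc, Finset.mem_map, Finset.mem_range, Function.Embedding.coeFn_mk]
      constructor
      · intro hk; exact ⟨k - m, by omega, by omega⟩
      · rintro ⟨j, hj, rfl⟩; omega
    rw [hIcc, Finset.sum_map]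
    simp only [Function.Embedding.coeFn_mk]
    have : ∀ j ∈ Finset.range (n - m + 1),
        (n.choose (m + j) : ℝ) * a ^ (n - (m + j)) * (((m + j).choose m : ℝ) * (-a) ^ (m + j - m)) =
        (n.choose m : ℝ) * ((n - m).choose j : ℝ) * a ^ ((n - m) - j) * (-a) ^ j := by
      intro j hj
      simp only [Finset.mem_range] at hj
      have h1 : m + j ≤ n := by omega
      have h2 : m ≤ m + j := Nat.le_add_right _ _
      have := Nat.choose_mul (n := n) h2
      simp only [Nat.add_sub_cancel_left] at this
      have hc : (n.choose (m + j) : ℝ) * ((m + j).choose m : ℝ) = (n.choose m : ℝ) * ((n - m).choose j : ℝ) := by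
        exact_mod_cast this
      have he : n - (m + j) = (n - m) - j := by omega
      rw [Nat.add_sub_cancel_left, he]
      calc (n.choose (m + j) : ℝ) * a ^ (n - m - j) * (((m + j).choose m : ℝ) * (-a) ^ j)
          = ((n.choose (m + j) : ℝ) * ((m + j).choose m : ℝ)) * a ^ (n - m - j) * (-a) ^ j := by ring
        _ = (n.choose m : ℝ) * ((n - m).choose j : ℝ) * a ^ (n - m - j) * (-a) ^ j := by rw [hc]
    rw [Finset.sum_congr rfl this]
    have : ∑ j ∈ Finset.range (n - m + 1),
        (n.choose m : ℝ) * ((n - m).choose j : ℝ) * a ^ (n - m - j) * (-a) ^ j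
        = (n.choose m : ℝ) * ∑ j ∈ Finset.range (n - m + 1),
          ((n - m).choose j : ℝ) * a ^ (n - m - j) * (-a) ^ j := by
      rw [Finset.mul_sum]; apply Finset.sum_congr rfl; intros; ring
    rw [this, mcharlier_zero_sum]
    rcases eq_or_lt_of_le h with rfl | hlt
    · simp
    · have : ¬ (n - m = 0) := by omega
      simp [this, Nat.ne_of_gt hlt]
  · have : ∀ k ∈ Finset.range (n + 1),
        (n.choose k : ℝ) * a ^ (n - k) * ((k.choose m : ℝ) * (-a) ^ (k - m)) = 0 := by
      intro k hk
      simp only [Finset.mem_range] at hk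
      rw [Nat.choose_eq_zero_of_lt (show k < m by omega)]
      simp
    rw [Finset.sum_congr rfl this, Finset.sum_const_zero, if_neg (Nat.ne_of_lt h)]

/-- Inversion formula for the multiple Charlier polynomials. -/
theorem mcharlier_inversion (r : ℕ) (hr : 1 ≤ r) (a : Fin r → ℝ) (n : Fin r → ℕ) (x : ℝ) :
    fallingFactorial x (∑ i, n i) =
      ∑ k ∈ Fintype.piFinset (fun i => Finset.range (n i + 1)),
        (∏ i, ((n i).choose (k i) : ℝ) * (a i) ^ (n i - k i)) * mcharlier a k x := by
  classical
  set S := Fintype.piFinset (fun i => Finset.range (n i + 1)) with hS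
  -- extend the inner sum in mcharlier to S
  have hext : ∀ k ∈ S, mcharlier a k x = ∑ m ∈ S,
      (∏ i, ((k i).choose (m i) : ℝ) * (-a i) ^ (k i - m i)) * fallingFactorial x (∑ i, m i) := by
    intro k hk
    rw [Fintype.mem_piFinset] at hk
    unfold mcharlier
    apply Finset.sum_subset
    · intro m hm
      rw [Fintype.mem_piFinset] at hm ⊢
      intro i
      have h1 := hm i
      have h2 := hk i
      simp only [Finset.mem_range] at h1 h2 ⊢
      omega
    · intro m hm hm'
      rw [Fintype.mem_piFinset] at hm'
      push_neg at hm'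
      obtain ⟨i, hi⟩ := hm'
      simp only [Finset.mem_range, not_lt] at hi
      have : ((k i).choose (m i) : ℝ) * (-a i) ^ (k i - m i) = 0 := by
        rw [Nat.choose_eq_zero_of_lt (show k i < m i by omega)]
        simp
      rw [Finset.prod_eq_zero (Finset.mem_univ i) this, zero_mul]
  have step1 : ∑ k ∈ S, (∏ i, ((n i).choose (k i) : ℝ) * (a i) ^ (n i - k i)) * mcharlier a k x
      = ∑ k ∈ S, ∑ m ∈ S,
        (∏ i, ((n i).choose (k i) : ℝ) * (a i) ^ (n i - k i) *
          (((k i).choose (m i) : ℝ) * (-a i) ^ (k i - m i))) * fallingFactorial x (∑ i, m i) := by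
    apply Finset.sum_congr rfl
    intro k hk
    rw [hext k hk, Finset.mul_sum]
    apply Finset.sum_congr rfl
    intro m hm
    rw [← mul_assoc, ← Finset.prod_mul_distrib]
  rw [step1, Finset.sum_comm]
  have step2 : ∀ m ∈ S, ∑ k ∈ S,
      (∏ i, ((n i).choose (k i) : ℝ) * (a i) ^ (n i - k i) *
        (((k i).choose (m i) : ℝ) * (-a i) ^ (k i - m i))) * fallingFactorial x (∑ i, m i)
      = (if ∀ i ∈ Finset.univ, n i = m i then (1 : ℝ) else 0) * fallingFactorial x (∑ i, m i) := by
    intro m hm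
    rw [← Finset.sum_mul]
    congr 1
    have hps := Finset.prod_univ_sum (fun i => Finset.range (n i + 1))
      (fun i t => ((n i).choose t : ℝ) * a i ^ (n i - t) *
        (((t).choose (m i) : ℝ) * (-a i) ^ (t - m i)))
    rw [hS, ← hps]
    rw [Finset.prod_congr rfl (fun i _ => mcharlier_key (a i) (n i) (m i))]
    rw [Finset.prod_boole]
    split_ifs <;> rfl
  rw [Finset.sum_congr rfl step2]
  have hn : n ∈ S := by
    rw [Fintype.mem_piFinset]
    intro i
    simp
  rw [Finset.sum_eq_single_of_mem n hn]
  · simp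
  · intro b hb hbn
    have hnot : ¬ (∀ i ∈ Finset.univ, n i = b i) := fun hall =>
      hbn (funext fun i => (hall i (Finset.mem_univ i)).symm)
    rw [if_neg hnot, zero_mul]
end

section
/- Let r ≥ 1 and a, b : Fin r → ℝ. For every multi-index n ∈ ℕ^r and every real number x, the connection formula holds: C_n^{(b)}(x) = Σ_{k₁=0}^{n₁} ⋯ Σ_{k_r=0}^{n_r} (∏_{i=1}^{r} C(n_i,k_i) (a_i-b_i)^{k_i}) C_{n-k}^{(a)}(x), where n-k denotes the componentwise difference. -/
open Finset

lemma choose_mul_choose_sub {n k m : ℕ} (h : k + m ≤ n) :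
    n.choose k * (n - k).choose m = n.choose m * (n - m).choose k := by
  have h1 := Nat.choose_mul (n := n) (k := k + m) (s := k) (Nat.le_add_right _ _)
  have h2 := Nat.choose_mul (n := n) (k := k + m) (s := m) (Nat.le_add_left _ _)
  rw [Nat.add_sub_cancel_left] at h1
  rw [Nat.add_sub_cancel] at h2
  rw [Nat.choose_symm_add] at h1
  omega

lemma key_s10 (n m : ℕ) (hm : m ≤ n) (A B : ℝ) :
    (n.choose m : ℝ) * B ^ (n - m) =
      ∑ k ∈ range (n + 1), ((n.choose k : ℝ) * A ^ k) *
        (((n - k).choose m : ℝ) * (B - A) ^ (n - k - m)) := by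
  rw [← Finset.sum_subset (Finset.range_subset_range.2 (by omega : n - m + 1 ≤ n + 1))
      (by intro k hk hk'
          simp only [mem_range] at hk hk'
          have h2 : n - k < m := by omega
          rw [Nat.choose_eq_zero_of_lt h2]
          push_cast; ring)]
  have : ∀ k ∈ range (n - m + 1),
      ((n.choose k : ℝ) * A ^ k) * (((n - k).choose m : ℝ) * (B - A) ^ (n - k - m)) =
      (n.choose m : ℝ) * (A ^ k * (B - A) ^ (n - m - k) * ((n - m).choose k : ℝ)) := by
    intro k hk
    simp only [mem_range] at hk
    have hcc := choose_mul_choose_sub (n := n) (k := k) (m := m) (by omega)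
    have hcc' : (n.choose k : ℝ) * ((n - k).choose m : ℝ)
        = (n.choose m : ℝ) * ((n - m).choose k : ℝ) := by exact_mod_cast hcc
    have he : n - k - m = n - m - k := by omega
    rw [he]
    linear_combination hcc' * (A ^ k * (B - A) ^ (n - m - k))
  rw [Finset.sum_congr rfl this, ← Finset.mul_sum, ← add_pow]
  ring_nf

/-- Connection formula between multiple Charlier polynomials with different parameters. -/
theorem mcharlier_connection (r : ℕ) (hr : 1 ≤ r) (a b : Fin r → ℝ) (n : Fin r → ℕ) (x : ℝ) :
    mcharlier b n x =
      ∑ k ∈ Fintype.piFinset (fun i => Finset.range (n i + 1)),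
        (∏ i, ((n i).choose (k i) : ℝ) * (a i - b i) ^ (k i)) *
          mcharlier a (fun i => n i - k i) x := by
  unfold mcharlier
  -- expand each coefficient using the key lemma
  have step1 : ∀ m ∈ Fintype.piFinset (fun i => Finset.range (n i + 1)),
      (∏ i, ((n i).choose (m i) : ℝ) * (-b i) ^ (n i - m i)) * fallingFactorial x (∑ i, m i)
      = ∑ k ∈ Fintype.piFinset (fun i => Finset.range (n i + 1)),
          ((∏ i, ((n i).choose (k i) : ℝ) * (a i - b i) ^ (k i)) *
           (∏ i, ((n i - k i).choose (m i) : ℝ) * (-a i) ^ (n i - k i - m i)))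
            * fallingFactorial x (∑ i, m i) := by
    intro m hm
    rw [Fintype.mem_piFinset] at hm
    have h1 : (∏ i, ((n i).choose (m i) : ℝ) * (-b i) ^ (n i - m i))
        = ∑ k ∈ Fintype.piFinset (fun i => Finset.range (n i + 1)),
            ∏ i, (((n i).choose (k i) : ℝ) * (a i - b i) ^ (k i)) *
              (((n i - k i).choose (m i) : ℝ) * (-a i) ^ (n i - k i - m i)) := by
      have h0 : ∀ i : Fin r, ((n i).choose (m i) : ℝ) * (-b i) ^ (n i - m i)
          = ∑ c ∈ Finset.range (n i + 1), (((n i).choose c : ℝ) * (a i - b i) ^ c) *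
              (((n i - c).choose (m i) : ℝ) * (-a i) ^ (n i - c - m i)) := by
        intro i
        have hmi : m i ≤ n i := by have := hm i; simp at this; omega
        have hk := key_s10 (n i) (m i) hmi (a i - b i) (-b i)
        rw [show -b i - (a i - b i) = -a i by ring] at hk
        exact hk
      rw [Finset.prod_congr rfl fun i _ => h0 i, Finset.prod_univ_sum]
    rw [h1, Finset.sum_mul]
    refine Finset.sum_congr rfl fun k _ => ?_
    rw [Finset.prod_mul_distrib]
  rw [Finset.sum_congr rfl step1, Finset.sum_comm]
  refine Finset.sum_congr rfl fun k hk => ?_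
  rw [Fintype.mem_piFinset] at hk
  -- extend inner sum domain
  have hsub : Fintype.piFinset (fun i => Finset.range (n i - k i + 1)) ⊆
      Fintype.piFinset (fun i => Finset.range (n i + 1)) := by
    apply Fintype.piFinset_subset
    intro i
    exact Finset.range_subset_range.2 (by omega)
  rw [← Finset.sum_subset hsub (by
    intro m hm hm'
    rw [Fintype.mem_piFinset] at hm hm'
    push_neg at hm'
    obtain ⟨i, hi⟩ := hm'
    simp only [Finset.mem_range, not_lt] at hi
    have hz : (n i - k i).choose (m i) = 0 := Nat.choose_eq_zero_of_lt (by omega)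
    have hp : (∏ j, ((n j - k j).choose (m j) : ℝ) * (-a j) ^ (n j - k j - m j)) = 0 :=
      Finset.prod_eq_zero (Finset.mem_univ i) (by rw [hz]; simp)
    rw [hp]
    ring)]
  rw [Finset.mul_sum]
  refine Finset.sum_congr rfl fun m _ => ?_
  ring
end

section
/- Let ω ≠ 0 be real and let {P_{n₁,n₂}}_{n₁,n₂≥0} be real polynomials with deg P_{n₁,n₂} = n₁ + n₂ for all n₁, n₂. Then {P_{n₁,n₂}} is a multiple Δ_ω-Appell polynomial set if and only if there exists a doubly indexed sequence of real numbers {a_{m₁,m₂}} with a_{0,0} ≠ 0 such that P_{n₁,n₂}(x) = Σ_{k₁=0}^{n₁} Σ_{k₂=0}^{n₂} C(n₁,k₁) C(n₂,k₂) a_{n₁-k₁,n₂-k₂} x^{(k₁+k₂,ω)} for all n₁, n₂ and all real x. -/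
open Polynomial

/-- The generalized falling factorial `x^{(n,ω)} = ∏_{j=0}^{n-1} (x - jω)`. -/
noncomputable def genFallingFactorial (ω x : ℝ) (n : ℕ) : ℝ :=
  ∏ j ∈ Finset.range n, (x - j * ω)

/-- The difference operator `Δ_ω` acting on real polynomials:
`(Δ_ω f)(x) = (f(x+ω) - f(x))/ω`. -/
noncomputable def deltaOmega (ω : ℝ) (p : Polynomial ℝ) : Polynomial ℝ :=
  Polynomial.C ω⁻¹ * (p.comp (Polynomial.X + Polynomial.C ω) - p)

/-- A doubly indexed family of real polynomials is a multiple `Δ_ω`-Appell polynomial set if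
`Δ_ω P_{n₁,n₂} = n₁ P_{n₁-1,n₂} + n₂ P_{n₁,n₂-1}`, where a term whose index would be
negative is omitted (its coefficient `nᵢ` is `0`). -/
def IsMultipleDeltaAppell (ω : ℝ) (P : ℕ → ℕ → Polynomial ℝ) : Prop :=
  ∀ n₁ n₂ : ℕ, deltaOmega ω (P n₁ n₂) =
    Polynomial.C (n₁ : ℝ) * P (n₁ - 1) n₂ + Polynomial.C (n₂ : ℝ) * P n₁ (n₂ - 1)

noncomputable def fF (ω : ℝ) (n : ℕ) : Polynomial ℝ :=
  ∏ j ∈ Finset.range n, (Polynomial.X - Polynomial.C (j * ω))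

lemma fF_eval (ω x : ℝ) (n : ℕ) : (fF ω n).eval x = genFallingFactorial ω x n := by
  simp [fF, genFallingFactorial, eval_prod]

lemma fF_eval_zero (ω : ℝ) (n : ℕ) (hn : 0 < n) : (fF ω n).eval 0 = 0 := by
  rw [fF_eval]
  unfold genFallingFactorial
  apply Finset.prod_eq_zero (Finset.mem_range.mpr hn)
  simp

lemma fF_comp (ω : ℝ) (n : ℕ) :
    (fF ω (n+1)).comp (X + C ω) = (X + C ω) * fF ω n := by
  unfold fF
  rw [Polynomial.prod_comp, Finset.prod_range_succ']
  simp only [sub_comp, X_comp, C_comp]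
  rw [mul_comm]
  congr 1
  · simp
  · exact Finset.prod_congr rfl fun i _ => by
      rw [Nat.cast_succ, add_mul, one_mul, C_add]; ring

lemma delta_fF (ω : ℝ) (hω : ω ≠ 0) (n : ℕ) :
    deltaOmega ω (fF ω n) = C (n : ℝ) * fF ω (n - 1) := by
  cases n with
  | zero => simp [deltaOmega, fF]
  | succ m =>
    unfold deltaOmega
    rw [fF_comp]
    have h1 : fF ω (m+1) = fF ω m * (X - C (m * ω)) := by
      unfold fF; rw [Finset.prod_range_succ]
    have h2 : (X + C ω) * fF ω m - fF ω (m+1) = C ((m+1) * ω) * fF ω m := by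
      rw [h1, show ((m:ℝ)+1) * ω = (m:ℝ)*ω + ω by ring, C_add]; ring
    rw [h2, ← mul_assoc, ← C_mul]
    rw [show (m+1 : ℕ) - 1 = m from rfl]
    congr 2
    push_cast
    field_simp

lemma deltaOmega_add (ω : ℝ) (p q : Polynomial ℝ) :
    deltaOmega ω (p + q) = deltaOmega ω p + deltaOmega ω q := by
  unfold deltaOmega; simp [add_comp]; ring

lemma deltaOmega_sum {ι : Type*} (ω : ℝ) (s : Finset ι) (f : ι → Polynomial ℝ) :
    deltaOmega ω (∑ i ∈ s, f i) = ∑ i ∈ s, deltaOmega ω (f i) := by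
  induction s using Finset.cons_induction with
  | empty => simp [deltaOmega]
  | cons i s hi ih => rw [Finset.sum_cons, Finset.sum_cons, deltaOmega_add, ih]

lemma deltaOmega_C_mul (ω c : ℝ) (p : Polynomial ℝ) :
    deltaOmega ω (C c * p) = C c * deltaOmega ω p := by
  unfold deltaOmega
  simp [mul_comp]
  ring

lemma const_of_comp_eq (ω : ℝ) (hω : ω ≠ 0) (p : Polynomial ℝ)
    (h : p.comp (X + C ω) = p) : p = C (p.eval 0) := by
  have hper : ∀ x : ℝ, p.eval (x + ω) = p.eval x := by
    intro x
    conv_rhs => rw [← h]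
    simp [eval_comp]
  have hk : ∀ k : ℕ, p.eval (k * ω) = p.eval 0 := by
    intro k
    induction k with
    | zero => simp
    | succ m ih => rw [Nat.cast_succ, add_mul, one_mul, hper, ih]
  by_contra hne
  have hroots : ∀ k : ℕ, (p - C (p.eval 0)).IsRoot (k * ω) := by
    intro k; simp [IsRoot, hk k]
  have hinf : {x : ℝ | (p - C (p.eval 0)).IsRoot x}.Infinite := by
    apply Set.infinite_of_injective_forall_mem (f := fun k : ℕ => (k : ℝ) * ω)
    · intro a b hab
      simp only at hab
      have := mul_right_cancel₀ hω hab
      exact_mod_cast this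
    · exact hroots
  have h0 := Polynomial.eq_zero_of_infinite_isRoot _ hinf
  exact hne (sub_eq_zero.mp h0)

lemma eq_of_delta_eq (ω : ℝ) (hω : ω ≠ 0) (p q : Polynomial ℝ)
    (h : deltaOmega ω p = deltaOmega ω q) (h0 : p.eval 0 = q.eval 0) : p = q := by
  have hC : (C ω⁻¹ : Polynomial ℝ) ≠ 0 := by simp [hω]
  unfold deltaOmega at h
  have h2 : p.comp (X + C ω) - p = q.comp (X + C ω) - q := mul_left_cancel₀ hC h
  have h3 : (p - q).comp (X + C ω) = p - q := by
    rw [sub_comp]; linear_combination h2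
  have h4 := const_of_comp_eq ω hω _ h3
  rw [eval_sub, h0, sub_self, map_zero] at h4
  linear_combination h4

noncomputable def Qp (ω : ℝ) (a : ℕ → ℕ → ℝ) (n₁ n₂ : ℕ) : Polynomial ℝ :=
  ∑ k₁ ∈ Finset.range (n₁ + 1), ∑ k₂ ∈ Finset.range (n₂ + 1),
    C ((n₁.choose k₁ : ℝ) * (n₂.choose k₂ : ℝ) * a (n₁ - k₁) (n₂ - k₂)) * fF ω (k₁ + k₂)

lemma Qp_eval (ω : ℝ) (a : ℕ → ℕ → ℝ) (n₁ n₂ : ℕ) (x : ℝ) :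
    (Qp ω a n₁ n₂).eval x =
      ∑ k₁ ∈ Finset.range (n₁ + 1), ∑ k₂ ∈ Finset.range (n₂ + 1),
        (n₁.choose k₁ : ℝ) * (n₂.choose k₂ : ℝ) * a (n₁ - k₁) (n₂ - k₂) *
          genFallingFactorial ω x (k₁ + k₂) := by
  simp [Qp, eval_finset_sum, fF_eval]

lemma Qp_eval_zero (ω : ℝ) (a : ℕ → ℕ → ℝ) (n₁ n₂ : ℕ) :
    (Qp ω a n₁ n₂).eval 0 = a n₁ n₂ := by
  simp only [Qp, eval_finset_sum]
  rw [Finset.sum_eq_single 0]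
  · rw [Finset.sum_eq_single 0]
    · simp [fF]
    · intro b _ hb
      have h := fF_eval_zero ω b (by omega)
      simp [h]
    · intro h; exact absurd (Finset.mem_range.mpr (by omega)) h
  · intro b _ hb
    apply Finset.sum_eq_zero
    intro k₂ _
    have h := fF_eval_zero ω (b + k₂) (by omega)
    simp [h]
  · intro h; exact absurd (Finset.mem_range.mpr (by omega)) h

lemma keyS (ω : ℝ) (n m : ℕ) (c : ℕ → ℕ → ℝ) :
    ∑ k₁ ∈ Finset.range (n + 1), ∑ k₂ ∈ Finset.range (m + 1),
      C ((k₁ : ℝ) * (n.choose k₁ : ℝ) * c k₁ k₂) * fF ω (k₁ + k₂ - 1)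
    = C (n : ℝ) * ∑ k₁ ∈ Finset.range ((n - 1) + 1), ∑ k₂ ∈ Finset.range (m + 1),
        C (((n - 1).choose k₁ : ℝ) * c (k₁ + 1) k₂) * fF ω (k₁ + k₂) := by
  cases n with
  | zero => simp
  | succ N =>
    rw [Finset.sum_range_succ']
    have h0 : ∑ k₂ ∈ Finset.range (m + 1),
        C (((0:ℕ) : ℝ) * ((N+1).choose 0 : ℝ) * c 0 k₂) * fF ω (0 + k₂ - 1) = 0 := by
      apply Finset.sum_eq_zero; intro k₂ _; simp
    rw [h0, add_zero]
    rw [show (N + 1 : ℕ) - 1 = N from rfl, Finset.mul_sum]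
    refine Finset.sum_congr rfl fun k₁ _ => ?_
    rw [Finset.mul_sum]
    refine Finset.sum_congr rfl fun k₂ _ => ?_
    rw [show k₁ + 1 + k₂ - 1 = k₁ + k₂ from by omega, ← mul_assoc, ← C_mul]
    congr 2
    have h := Nat.add_one_mul_choose_eq N k₁
    have h' : ((N + 1 : ℕ) : ℝ) * (N.choose k₁ : ℝ)
        = ((N + 1).choose (k₁ + 1) : ℝ) * ((k₁ + 1 : ℕ) : ℝ) := by exact_mod_cast h
    push_cast at h' ⊢
    linear_combination (-(c (k₁ + 1) k₂)) * h'

lemma keyS2 (ω : ℝ) (n m : ℕ) (c : ℕ → ℕ → ℝ) :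
    ∑ k₁ ∈ Finset.range (n + 1), ∑ k₂ ∈ Finset.range (m + 1),
      C ((k₂ : ℝ) * (m.choose k₂ : ℝ) * c k₁ k₂) * fF ω (k₁ + k₂ - 1)
    = C (m : ℝ) * ∑ k₁ ∈ Finset.range (n + 1), ∑ k₂ ∈ Finset.range ((m - 1) + 1),
        C (((m - 1).choose k₂ : ℝ) * c k₁ (k₂ + 1)) * fF ω (k₁ + k₂) := by
  have h1 : ∑ k₁ ∈ Finset.range (n + 1), ∑ k₂ ∈ Finset.range (m + 1),
      C ((k₂ : ℝ) * (m.choose k₂ : ℝ) * c k₁ k₂) * fF ω (k₁ + k₂ - 1)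
      = ∑ k₂ ∈ Finset.range (m + 1), ∑ k₁ ∈ Finset.range (n + 1),
        C ((k₂ : ℝ) * (m.choose k₂ : ℝ) * (fun u v => c v u) k₂ k₁) * fF ω (k₂ + k₁ - 1) := by
    rw [Finset.sum_comm]
    exact Finset.sum_congr rfl fun k₂ _ => Finset.sum_congr rfl fun k₁ _ => by
      rw [add_comm k₁ k₂]
  rw [h1, keyS ω m n (fun u v => c v u)]
  congr 1
  rw [Finset.sum_comm]
  exact Finset.sum_congr rfl fun k₁ _ => Finset.sum_congr rfl fun k₂ _ => by
    rw [add_comm k₂ k₁]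

lemma delta_Qp (ω : ℝ) (hω : ω ≠ 0) (a : ℕ → ℕ → ℝ) (n₁ n₂ : ℕ) :
    deltaOmega ω (Qp ω a n₁ n₂) =
      C (n₁ : ℝ) * Qp ω a (n₁ - 1) n₂ + C (n₂ : ℝ) * Qp ω a n₁ (n₂ - 1) := by
  have step1 : deltaOmega ω (Qp ω a n₁ n₂)
      = ∑ k₁ ∈ Finset.range (n₁ + 1), ∑ k₂ ∈ Finset.range (n₂ + 1),
          (C ((k₁ : ℝ) * (n₁.choose k₁ : ℝ) *
              ((n₂.choose k₂ : ℝ) * a (n₁ - k₁) (n₂ - k₂))) * fF ω (k₁ + k₂ - 1)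
          + C ((k₂ : ℝ) * (n₂.choose k₂ : ℝ) *
              ((n₁.choose k₁ : ℝ) * a (n₁ - k₁) (n₂ - k₂))) * fF ω (k₁ + k₂ - 1)) := by
    unfold Qp
    rw [deltaOmega_sum]
    refine Finset.sum_congr rfl fun k₁ _ => ?_
    rw [deltaOmega_sum]
    refine Finset.sum_congr rfl fun k₂ _ => ?_
    rw [deltaOmega_C_mul, delta_fF ω hω, ← mul_assoc, ← C_mul, ← add_mul, ← C_add]
    congr 2
    push_cast
    ring
  rw [step1]
  simp only [Finset.sum_add_distrib]
  rw [keyS ω n₁ n₂ (fun k₁ k₂ => (n₂.choose k₂ : ℝ) * a (n₁ - k₁) (n₂ - k₂)),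
      keyS2 ω n₁ n₂ (fun k₁ k₂ => (n₁.choose k₁ : ℝ) * a (n₁ - k₁) (n₂ - k₂))]
  congr 1
  · congr 1
    unfold Qp
    refine Finset.sum_congr rfl fun k₁ _ => Finset.sum_congr rfl fun k₂ _ => ?_
    rw [show n₁ - (k₁ + 1) = n₁ - 1 - k₁ from by omega, mul_assoc]
  · congr 1
    unfold Qp
    refine Finset.sum_congr rfl fun k₁ _ => Finset.sum_congr rfl fun k₂ _ => ?_
    rw [show n₂ - (k₂ + 1) = n₂ - 1 - k₂ from by omega]
    congr 2
    ring

/-- A polynomial set is multiple `Δ_ω`-Appell iff it has an explicit representation in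
terms of the generalized falling factorials with coefficients `a_{m₁,m₂}`, `a_{0,0} ≠ 0`. -/
theorem multipleDeltaAppell_iff_representation (ω : ℝ) (hω : ω ≠ 0)
    (P : ℕ → ℕ → Polynomial ℝ) (hdeg : ∀ n₁ n₂ : ℕ, (P n₁ n₂).natDegree = n₁ + n₂) :
    IsMultipleDeltaAppell ω P ↔
      ∃ a : ℕ → ℕ → ℝ, a 0 0 ≠ 0 ∧
        ∀ (n₁ n₂ : ℕ) (x : ℝ),
          (P n₁ n₂).eval x =
            ∑ k₁ ∈ Finset.range (n₁ + 1), ∑ k₂ ∈ Finset.range (n₂ + 1),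
              (n₁.choose k₁ : ℝ) * (n₂.choose k₂ : ℝ) * a (n₁ - k₁) (n₂ - k₂) *
                genFallingFactorial ω x (k₁ + k₂) := by
  constructor
  · intro hApp
    set a : ℕ → ℕ → ℝ := fun m₁ m₂ => (P m₁ m₂).eval 0 with ha
    have hP00 : P 0 0 ≠ 0 := by
      intro h00
      have h10 := hApp 1 0
      simp only [Nat.cast_one, Nat.cast_zero, map_zero, zero_mul, add_zero, map_one,
        one_mul, show (1:ℕ) - 1 = 0 from rfl, h00, mul_zero] at h10
      -- h10 : deltaOmega ω (P 1 0) = 0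
      have hcomp : (P 1 0).comp (X + C ω) = P 1 0 := by
        have hC : (C ω⁻¹ : Polynomial ℝ) ≠ 0 := by simp [hω]
        unfold deltaOmega at h10
        have h2 : (P 1 0).comp (X + C ω) - P 1 0 = 0 :=
          (mul_eq_zero.mp h10).resolve_left hC
        linear_combination h2
      have := const_of_comp_eq ω hω _ hcomp
      have hd := hdeg 1 0
      rw [this] at hd
      simp at hd
    have ha00 : a 0 0 ≠ 0 := by
      intro h
      apply hP00
      have h0 : (P 0 0).eval 0 = 0 := h
      have hdeg00 := hdeg 0 0
      have hc := Polynomial.eq_C_of_natDegree_eq_zero (by simpa using hdeg00)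
      rw [hc, Polynomial.coeff_zero_eq_eval_zero, h0, map_zero]
    have key : ∀ N n₁ n₂ : ℕ, n₁ + n₂ ≤ N → P n₁ n₂ = Qp ω a n₁ n₂ := by
      intro N
      induction N with
      | zero =>
        intro n₁ n₂ h
        have h1 : n₁ = 0 := by omega
        have h2 : n₂ = 0 := by omega
        subst h1; subst h2
        apply eq_of_delta_eq ω hω
        · rw [hApp 0 0, delta_Qp ω hω]
          simp
        · rw [Qp_eval_zero]
      | succ N ih =>
        intro n₁ n₂ h
        apply eq_of_delta_eq ω hω
        · rw [hApp, delta_Qp ω hω]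
          have e1 : C (n₁ : ℝ) * P (n₁ - 1) n₂ = C (n₁ : ℝ) * Qp ω a (n₁ - 1) n₂ := by
            rcases Nat.eq_zero_or_pos n₁ with h0 | h0
            · subst h0; simp
            · rw [ih (n₁ - 1) n₂ (by omega)]
          have e2 : C (n₂ : ℝ) * P n₁ (n₂ - 1) = C (n₂ : ℝ) * Qp ω a n₁ (n₂ - 1) := by
            rcases Nat.eq_zero_or_pos n₂ with h0 | h0
            · subst h0; simp
            · rw [ih n₁ (n₂ - 1) (by omega)]
          rw [e1, e2]
        · rw [Qp_eval_zero]
    refine ⟨a, ha00, fun n₁ n₂ x => ?_⟩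
    rw [key (n₁ + n₂) n₁ n₂ le_rfl, Qp_eval]
  · rintro ⟨a, _, hrep⟩
    have hPQ : ∀ n₁ n₂, P n₁ n₂ = Qp ω a n₁ n₂ := by
      intro n₁ n₂
      apply Polynomial.funext
      intro x
      rw [hrep, Qp_eval]
    intro n₁ n₂
    rw [hPQ n₁ n₂, hPQ (n₁ - 1) n₂, hPQ n₁ (n₂ - 1), delta_Qp ω hω]
end

section
/- Let ω ≠ 0 be real, let {P_{n₁,n₂}}_{n₁,n₂≥0} be real polynomials, and let {a_{m₁,m₂}} be a doubly indexed sequence of real numbers with a_{0,0} ≠ 0. Then P_{n₁,n₂}(x) = Σ_{k₁=0}^{n₁} Σ_{k₂=0}^{n₂} C(n₁,k₁) C(n₂,k₂) a_{n₁-k₁,n₂-k₂} x^{(k₁+k₂,ω)} holds for all n₁, n₂ and all real x if and only if P_{n₁,n₂}(x) = Σ_{k₁=0}^{n₁} Σ_{k₂=0}^{n₂} C(n₁,k₁) C(n₂,k₂) · ((n₁+n₂-k₁-k₂)!/(n₁+n₂)!) · a_{k₁,k₂} · (Δ_ω^{k₁+k₂} x^{(n₁+n₂,ω)}) holds for all n₁,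 n₂ and all real x, where Δ_ω^{m} denotes the m-fold iterate of Δ_ω. -/
open Polynomial

/-- The generalized falling factorial `x^{(n,ω)}` as a polynomial. -/
noncomputable def genFallingFactorialPoly (ω : ℝ) (n : ℕ) : Polynomial ℝ :=
  ∏ j ∈ Finset.range n, (Polynomial.X - Polynomial.C (j * ω))

lemma eval_gffPoly (ω x : ℝ) (n : ℕ) :
    (genFallingFactorialPoly ω n).eval x = genFallingFactorial ω x n := by
  simp [genFallingFactorialPoly, genFallingFactorial, Polynomial.eval_prod]

lemma delta_C_mul (ω c : ℝ) (p : Polynomial ℝ) :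
    deltaOmega ω (Polynomial.C c * p) = Polynomial.C c * deltaOmega ω p := by
  simp only [deltaOmega, Polynomial.mul_comp, Polynomial.C_comp]
  ring

lemma iter_delta_C_mul (ω c : ℝ) (m : ℕ) (p : Polynomial ℝ) :
    (deltaOmega ω)^[m] (Polynomial.C c * p) = Polynomial.C c * (deltaOmega ω)^[m] p := by
  induction m generalizing p with
  | zero => simp
  | succ m ih => simp [Function.iterate_succ_apply, delta_C_mul, ih]

lemma delta_gff_succ (ω : ℝ) (hω : ω ≠ 0) (n : ℕ) :
    deltaOmega ω (genFallingFactorialPoly ω (n + 1)) =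
      Polynomial.C ((n : ℝ) + 1) * genFallingFactorialPoly ω n := by
  apply Polynomial.funext
  intro x
  have h1 : (genFallingFactorialPoly ω (n+1)).eval (x + ω)
      = genFallingFactorial ω x n * (x + ω) := by
    rw [eval_gffPoly]
    rw [genFallingFactorial, Finset.prod_range_succ']
    congr 1
    · apply Finset.prod_congr rfl
      intro j _
      push_cast
      ring
    · ring
  have h2 : (genFallingFactorialPoly ω (n+1)).eval x
      = genFallingFactorial ω x n * (x - n * ω) := by
    rw [eval_gffPoly, genFallingFactorial, Finset.prod_range_succ]
    rfl
  simp only [deltaOmega, Polynomial.eval_mul, Polynomial.eval_C, Polynomial.eval_sub,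
    Polynomial.eval_comp, Polynomial.eval_add, Polynomial.eval_X]
  rw [h1, h2, eval_gffPoly]
  field_simp
  ring

lemma iter_delta_gff (ω : ℝ) (hω : ω ≠ 0) :
    ∀ (m n : ℕ), m ≤ n → (deltaOmega ω)^[m] (genFallingFactorialPoly ω n) =
      Polynomial.C ((n.descFactorial m : ℕ) : ℝ) * genFallingFactorialPoly ω (n - m) := by
  intro m
  induction m with
  | zero => intro n _; simp
  | succ m ih =>
    intro n hn
    obtain ⟨n', rfl⟩ : ∃ n', n = n' + 1 := ⟨n - 1, by omega⟩
    rw [Function.iterate_succ_apply, delta_gff_succ ω hω, iter_delta_C_mul,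
      ih n' (by omega)]
    rw [Nat.succ_descFactorial_succ]
    push_cast
    rw [map_mul]
    ring

/-- The representation of `P_{n₁,n₂}` in terms of generalized falling factorials with
coefficients `a_{n₁-k₁,n₂-k₂}` is equivalent to the representation in terms of the iterated
differences `Δ_ω^{k₁+k₂} x^{(n₁+n₂,ω)}` with coefficients `a_{k₁,k₂}`. -/
theorem representation_iff_delta_representation (ω : ℝ) (hω : ω ≠ 0)
    (P : ℕ → ℕ → Polynomial ℝ) (a : ℕ → ℕ → ℝ) (ha : a 0 0 ≠ 0) :
    (∀ (n₁ n₂ : ℕ) (x : ℝ),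
        (P n₁ n₂).eval x =
          ∑ k₁ ∈ Finset.range (n₁ + 1), ∑ k₂ ∈ Finset.range (n₂ + 1),
            (n₁.choose k₁ : ℝ) * (n₂.choose k₂ : ℝ) * a (n₁ - k₁) (n₂ - k₂) *
              genFallingFactorial ω x (k₁ + k₂)) ↔
      (∀ (n₁ n₂ : ℕ) (x : ℝ),
        (P n₁ n₂).eval x =
          ∑ k₁ ∈ Finset.range (n₁ + 1), ∑ k₂ ∈ Finset.range (n₂ + 1),
            (n₁.choose k₁ : ℝ) * (n₂.choose k₂ : ℝ) *
              (((n₁ + n₂ - k₁ - k₂).factorial : ℝ) / ((n₁ + n₂).factorial : ℝ)) *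
                a k₁ k₂ *
                  ((deltaOmega ω)^[k₁ + k₂] (genFallingFactorialPoly ω (n₁ + n₂))).eval x) := by
  have key : ∀ (n₁ n₂ : ℕ) (x : ℝ),
      (∑ k₁ ∈ Finset.range (n₁ + 1), ∑ k₂ ∈ Finset.range (n₂ + 1),
            (n₁.choose k₁ : ℝ) * (n₂.choose k₂ : ℝ) *
              (((n₁ + n₂ - k₁ - k₂).factorial : ℝ) / ((n₁ + n₂).factorial : ℝ)) *
                a k₁ k₂ *
                  ((deltaOmega ω)^[k₁ + k₂] (genFallingFactorialPoly ω (n₁ + n₂))).eval x)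
      = ∑ k₁ ∈ Finset.range (n₁ + 1), ∑ k₂ ∈ Finset.range (n₂ + 1),
            (n₁.choose k₁ : ℝ) * (n₂.choose k₂ : ℝ) * a (n₁ - k₁) (n₂ - k₂) *
              genFallingFactorial ω x (k₁ + k₂) := by
    intro n₁ n₂ x
    have step1 : ∀ k₁ ∈ Finset.range (n₁ + 1), ∀ k₂ ∈ Finset.range (n₂ + 1),
        (n₁.choose k₁ : ℝ) * (n₂.choose k₂ : ℝ) *
          (((n₁ + n₂ - k₁ - k₂).factorial : ℝ) / ((n₁ + n₂).factorial : ℝ)) *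
            a k₁ k₂ *
              ((deltaOmega ω)^[k₁ + k₂] (genFallingFactorialPoly ω (n₁ + n₂))).eval x
        = (n₁.choose k₁ : ℝ) * (n₂.choose k₂ : ℝ) * a k₁ k₂ *
            genFallingFactorial ω x ((n₁ - k₁) + (n₂ - k₂)) := by
      intro k₁ hk₁ k₂ hk₂
      rw [Finset.mem_range] at hk₁ hk₂
      have hk : k₁ + k₂ ≤ n₁ + n₂ := by omega
      rw [iter_delta_gff ω hω _ _ hk]
      have hfac : ((n₁ + n₂ - (k₁ + k₂)).factorial : ℝ) *
          (((n₁ + n₂).descFactorial (k₁ + k₂) : ℕ) : ℝ) = ((n₁ + n₂).factorial : ℝ) := by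
        exact_mod_cast congrArg (Nat.cast (R := ℝ)) (Nat.factorial_mul_descFactorial hk)
      have hne : ((n₁ + n₂).factorial : ℝ) ≠ 0 := by
        exact_mod_cast (n₁ + n₂).factorial_ne_zero
      rw [Polynomial.eval_mul, Polynomial.eval_C, eval_gffPoly]
      rw [show n₁ + n₂ - k₁ - k₂ = n₁ + n₂ - (k₁ + k₂) by omega,
        show n₁ + n₂ - (k₁ + k₂) = (n₁ - k₁) + (n₂ - k₂) by omega] at *
      have h1 : (((n₁ - k₁) + (n₂ - k₂)).factorial : ℝ) / ((n₁ + n₂).factorial : ℝ) *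
          (((n₁ + n₂).descFactorial (k₁ + k₂) : ℕ) : ℝ) = 1 := by
        rw [div_mul_eq_mul_div, hfac, div_self hne]
      linear_combination ((n₁.choose k₁ : ℝ) * (n₂.choose k₂ : ℝ) * a k₁ k₂ *
        genFallingFactorial ω x ((n₁ - k₁) + (n₂ - k₂))) * h1
    rw [Finset.sum_congr rfl (fun k₁ hk₁ => Finset.sum_congr rfl (fun k₂ hk₂ => step1 k₁ hk₁ k₂ hk₂))]
    rw [← Finset.sum_range_reflect]
    apply Finset.sum_congr rfl
    intro k₁ hk₁
    rw [Finset.mem_range] at hk₁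
    rw [← Finset.sum_range_reflect]
    apply Finset.sum_congr rfl
    intro k₂ hk₂
    rw [Finset.mem_range] at hk₂
    have e1 : n₁ + 1 - 1 - k₁ = n₁ - k₁ := by omega
    have e2 : n₂ + 1 - 1 - k₂ = n₂ - k₂ := by omega
    rw [e1, e2, Nat.choose_symm (by omega), Nat.choose_symm (by omega),
      show n₁ - (n₁ - k₁) = k₁ by omega, show n₂ - (n₂ - k₂) = k₂ by omega]
  constructor
  · intro h n₁ n₂ x; rw [h n₁ n₂ x, key]
  · intro h n₁ n₂ x; rw [h n₁ n₂ x, key]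
end

section
/- Let r ≥ 1, let ω ≠ 0 be real, and let {P_n}_{n∈ℕ^r} be real polynomials indexed by multi-indices with deg P_n = |n| = n₁ + ⋯ + n_r. Then Δ_ω P_n = Σ_{j=1}^{r} n_j P_{n-e_j} holds for all n (where e_j is the j-th unit multi-index and terms with a negative index are omitted) if and only if there exists a family of real numbers {a_m}_{m∈ℕ^r} with a_0 ≠ 0 such that P_n(x) = Σ_{k₁=0}^{n₁} ⋯ Σ_{k_r=0}^{n_r} (∏_{i=1}^{r} C(n_i,k_i)) a_{n-k} x^{(k₁+⋯+k_r,ω)} for all n and all real x. -/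
open Polynomial

noncomputable def ffP (ω : ℝ) (m : ℕ) : Polynomial ℝ :=
  ∏ j ∈ Finset.range m, (X - C (j * ω))

lemma ffP_eval (ω x : ℝ) (m : ℕ) : (ffP ω m).eval x = genFallingFactorial ω x m := by
  simp [ffP, genFallingFactorial, eval_prod]

lemma ffP_eval_zero (ω : ℝ) (m : ℕ) (hm : m ≠ 0) : (ffP ω m).eval 0 = 0 := by
  rw [ffP, eval_prod]
  apply Finset.prod_eq_zero (Finset.mem_range.mpr (Nat.pos_of_ne_zero hm))
  simp

lemma ffP_comp_shift (ω : ℝ) (m : ℕ) :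
    (ffP ω (m + 1)).comp (X + C ω) = (X + C ω) * ffP ω m := by
  rw [ffP, prod_comp]
  have : ∀ j : ℕ, (X - C ((j : ℝ) * ω)).comp (X + C ω) = X + C ω - C ((j : ℝ) * ω) := by
    intro j; simp
  calc ∏ j ∈ Finset.range (m + 1), (X - C ((j : ℝ) * ω)).comp (X + C ω)
      = ∏ j ∈ Finset.range (m + 1), (X + C ω - C ((j : ℝ) * ω)) := by
        exact Finset.prod_congr rfl fun j _ => this j
    _ = (∏ j ∈ Finset.range m, (X + C ω - C (((j : ℕ) + 1 : ℕ) * ω))) * (X + C ω - C ((0:ℕ) * ω)) := by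
        rw [Finset.prod_range_succ']
    _ = (X + C ω) * ffP ω m := by
        rw [ffP]
        push_cast
        have : ∀ j : ℕ, X + C ω - C (((j : ℝ) + 1) * ω) = X - C ((j:ℝ) * ω) := by
          intro j
          rw [sub_eq_sub_iff_sub_eq_sub]
          rw [← C_sub]
          ring_nf
        simp only [this, Nat.cast_zero, zero_mul, C_0, sub_zero]
        ring

lemma deltaOmega_ffP (ω : ℝ) (hω : ω ≠ 0) (m : ℕ) :
    deltaOmega ω (ffP ω m) = C (m : ℝ) * ffP ω (m - 1) := by
  cases m with
  | zero => simp [deltaOmega, ffP]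
  | succ m =>
    rw [deltaOmega, ffP_comp_shift]
    have hs : ffP ω (m + 1) = ffP ω m * (X - C ((m:ℝ) * ω)) := by
      rw [ffP, ffP, Finset.prod_range_succ]
    rw [hs]
    have key : (X + C ω) * ffP ω m - ffP ω m * (X - C ((m:ℝ) * ω))
        = (C ω + C ((m:ℝ) * ω)) * ffP ω m := by ring
    rw [key, ← C_add, ← mul_assoc, ← C_mul]
    have : ω⁻¹ * (ω + (m:ℝ) * ω) = ((m:ℕ)+1 : ℝ) := by field_simp; ring
    rw [this]
    norm_num

lemma eq_C_of_deltaOmega_eq_zero (ω : ℝ) (hω : ω ≠ 0) (p : Polynomial ℝ)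
    (h : deltaOmega ω p = 0) : p = C (p.eval 0) := by
  have hcomp : p.comp (X + C ω) = p := by
    have := h
    rw [deltaOmega, mul_eq_zero] at this
    rcases this with h1 | h1
    · exact absurd (C_eq_zero.mp h1) (inv_ne_zero hω)
    · exact sub_eq_zero.mp h1
  have heval : ∀ x : ℝ, p.eval (x + ω) = p.eval x := by
    intro x
    conv_rhs => rw [← hcomp]
    simp [eval_comp]
  have hk : ∀ k : ℕ, p.eval ((k:ℝ) * ω) = p.eval 0 := by
    intro k
    induction k with
    | zero => simp
    | succ k ih => push_cast; rw [add_mul, one_mul, heval]; exact ih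
  have hq : p - C (p.eval 0) = 0 := by
    apply Polynomial.eq_zero_of_infinite_isRoot
    apply Set.infinite_of_injective_forall_mem (f := fun k : ℕ => (k:ℝ) * ω)
    · intro a b hab
      simp only [mul_eq_mul_right_iff, Nat.cast_inj] at hab
      tauto
    · intro k
      simp [Polynomial.IsRoot, hk k]
  exact sub_eq_zero.mp hq

noncomputable def Qpoly (ω : ℝ) {r : ℕ} (a : (Fin r → ℕ) → ℝ) (n : Fin r → ℕ) : Polynomial ℝ :=
  ∑ k ∈ Fintype.piFinset (fun i => Finset.range (n i + 1)),
    C ((∏ i, ((n i).choose (k i) : ℝ)) * a (fun i => n i - k i)) * ffP ω (∑ i, k i)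

lemma Qpoly_eval_zero (ω : ℝ) {r : ℕ} (a : (Fin r → ℕ) → ℝ) (n : Fin r → ℕ) :
    (Qpoly ω a n).eval 0 = a n := by
  rw [Qpoly, eval_finset_sum]
  rw [Finset.sum_eq_single (fun _ => 0)]
  · simp [ffP]
  · intro k hk hne
    have : (∑ i, k i) ≠ 0 := by
      intro h
      apply hne
      funext i
      exact Finset.sum_eq_zero_iff.mp h i (Finset.mem_univ i)
    simp [ffP_eval_zero ω _ this]
  · intro h
    exact absurd (by simp [Fintype.mem_piFinset]) h

lemma sum_update_pred {r : ℕ} (k : Fin r → ℕ) (j : Fin r) (hk : 1 ≤ k j) :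
    (∑ i, Function.update k j (k j - 1) i) = (∑ i, k i) - 1 := by
  rw [Finset.sum_update_of_mem (Finset.mem_univ j)]
  have h2 := Finset.add_sum_erase Finset.univ k (Finset.mem_univ j)
  rw [show (Finset.univ : Finset (Fin r)) \ {j} = Finset.univ.erase j by
    ext; simp [Finset.mem_erase, and_comm]]
  omega

lemma choose_step (n k : ℕ) (hk : 1 ≤ k) (hn : 1 ≤ n) :
    k * n.choose k = n * (n - 1).choose (k - 1) := by
  obtain ⟨m, rfl⟩ := Nat.exists_eq_add_of_le hn
  obtain ⟨t, rfl⟩ := Nat.exists_eq_add_of_le hk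
  simp only [Nat.add_sub_cancel_left]
  have := Nat.add_one_mul_choose_eq m t
  rw [add_comm 1 t, add_comm 1 m, this, mul_comm]

lemma deltaOmega_Qpoly (ω : ℝ) (hω : ω ≠ 0) {r : ℕ} (a : (Fin r → ℕ) → ℝ) (n : Fin r → ℕ) :
    deltaOmega ω (Qpoly ω a n) =
      ∑ j : Fin r, C ((n j : ℝ)) * Qpoly ω a (Function.update n j (n j - 1)) := by
  rw [Qpoly, deltaOmega_sum]
  have hterm : ∀ k ∈ Fintype.piFinset (fun i => Finset.range (n i + 1)),
      deltaOmega ω (C ((∏ i, ((n i).choose (k i) : ℝ)) * a (fun i => n i - k i))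
          * ffP ω (∑ i, k i)) =
      ∑ j : Fin r, C ((∏ i, ((n i).choose (k i) : ℝ)) * a (fun i => n i - k i) * (k j : ℝ))
          * ffP ω ((∑ i, k i) - 1) := by
    intro k _
    rw [deltaOmega_C_mul, deltaOmega_ffP ω hω]
    rw [show ((∑ i, k i : ℕ) : ℝ) = ∑ j : Fin r, (k j : ℝ) from Nat.cast_sum _ _,
        map_sum, Finset.sum_mul, Finset.mul_sum]
    apply Finset.sum_congr rfl
    intro j _
    simp only [C_mul]
    ring
  rw [Finset.sum_congr rfl hterm, Finset.sum_comm]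
  apply Finset.sum_congr rfl
  intro j _
  rw [Qpoly, Finset.mul_sum]
  have hrhs : ∀ k' ∈ Fintype.piFinset
      (fun i => Finset.range (Function.update n j (n j - 1) i + 1)),
      C ((n j : ℝ)) * (C ((∏ i, ((Function.update n j (n j - 1) i).choose (k' i) : ℝ)) *
          a (fun i => Function.update n j (n j - 1) i - k' i)) * ffP ω (∑ i, k' i)) =
      C ((n j : ℝ) * ((∏ i, ((Function.update n j (n j - 1) i).choose (k' i) : ℝ)) *
          a (fun i => Function.update n j (n j - 1) i - k' i))) * ffP ω (∑ i, k' i) := by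
    intro k' _
    simp only [C_mul]; ring
  rw [Finset.sum_congr rfl hrhs]
  rcases Nat.eq_zero_or_pos (n j) with hnj | hnj
  · rw [Finset.sum_eq_zero, Finset.sum_eq_zero]
    · intro k' _; simp [hnj]
    · intro k hk
      have : k j = 0 := by
        have := (Fintype.mem_piFinset.mp hk) j
        rw [Finset.mem_range, hnj] at this
        omega
      simp [this]
  · rw [← Finset.sum_filter_of_ne (p := fun k => k j ≠ 0)
      (by intro k _ hf h0; apply hf; simp [h0])]
    apply Finset.sum_nbij' (fun k => Function.update k j (k j - 1))
      (fun k' => Function.update k' j (k' j + 1))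
    · intro k hk
      rw [Finset.mem_filter, Fintype.mem_piFinset] at hk
      rw [Fintype.mem_piFinset]
      intro i
      rcases eq_or_ne i j with rfl | hij
      · simp only [Function.update_self, Finset.mem_range]
        have := hk.1 i; rw [Finset.mem_range] at this
        have h0 := hk.2
        omega
      · simp only [Function.update_of_ne hij, Finset.mem_range]
        have := hk.1 i; rw [Finset.mem_range] at this
        omega
    · intro k' hk'
      rw [Fintype.mem_piFinset] at hk'
      rw [Finset.mem_filter, Fintype.mem_piFinset]
      refine ⟨fun i => ?_, by simp⟩
      rcases eq_or_ne i j with rfl | hij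
      · simp only [Function.update_self, Finset.mem_range]
        have := hk' i; rw [Finset.mem_range, Function.update_self] at this
        omega
      · simp only [Function.update_of_ne hij, Finset.mem_range]
        have := hk' i; rw [Finset.mem_range, Function.update_of_ne hij] at this
        omega
    · intro k hk
      rw [Finset.mem_filter] at hk
      funext i
      rcases eq_or_ne i j with rfl | hij
      · simp only [Function.update_self]
        have := hk.2; omega
      · simp [Function.update_of_ne hij]
    · intro k' _
      funext i
      rcases eq_or_ne i j with rfl | hij
      · simp
      · simp [Function.update_of_ne hij]
    · intro k hk
      rw [Finset.mem_filter, Fintype.mem_piFinset] at hk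
      have hkj : 1 ≤ k j := Nat.one_le_iff_ne_zero.mpr hk.2
      have hkn : k j ≤ n j := by
        have := hk.1 j; rw [Finset.mem_range] at this; omega
      have hsum : (∑ i, Function.update k j (k j - 1) i) = (∑ i, k i) - 1 :=
        sum_update_pred k j hkj
      rw [hsum]
      congr 1
      have haarg : (fun i => n i - k i) =
          (fun i => Function.update n j (n j - 1) i - Function.update k j (k j - 1) i) := by
        funext i
        rcases eq_or_ne i j with rfl | hij
        · simp only [Function.update_self]; omega
        · simp [Function.update_of_ne hij]
      rw [haarg]
      congr 1
      -- product identity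
      have hsplit : ∀ (f : Fin r → ℝ), (∏ i, f i) = f j * ∏ i ∈ Finset.univ.erase j, f i :=
        fun f => (Finset.mul_prod_erase Finset.univ f (Finset.mem_univ j)).symm
      rw [hsplit (fun i => ((n i).choose (k i) : ℝ)),
          hsplit (fun i => ((Function.update n j (n j - 1) i).choose
            (Function.update k j (k j - 1) i) : ℝ))]
      have hprods : (∏ i ∈ Finset.univ.erase j, ((n i).choose (k i) : ℝ)) =
          ∏ i ∈ Finset.univ.erase j, ((Function.update n j (n j - 1) i).choose
            (Function.update k j (k j - 1) i) : ℝ) := by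
        apply Finset.prod_congr rfl
        intro i hi
        have hij : i ≠ j := Finset.ne_of_mem_erase hi
        rw [Function.update_of_ne hij, Function.update_of_ne hij]
      rw [← hprods]
      simp only [Function.update_self]
      have hnat : k j * (n j).choose (k j) = n j * (n j - 1).choose (k j - 1) :=
        choose_step (n j) (k j) hkj hnj
      have hcast : (k j : ℝ) * ((n j).choose (k j) : ℝ) =
          (n j : ℝ) * (((n j - 1).choose (k j - 1) : ℕ) : ℝ) := by
        exact_mod_cast congrArg (fun x : ℕ => (x : ℝ)) hnat
      set p : ℝ := ∏ i ∈ Finset.univ.erase j, ((n i).choose (k i) : ℝ) with hp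
      set aa : ℝ := a fun i => Function.update n j (n j - 1) i - Function.update k j (k j - 1) i with haa
      linear_combination p * aa * hcast
lemma Qpoly_eval (ω : ℝ) {r : ℕ} (a : (Fin r → ℕ) → ℝ) (n : Fin r → ℕ) (x : ℝ) :
    (Qpoly ω a n).eval x =
      ∑ k ∈ Fintype.piFinset (fun i => Finset.range (n i + 1)),
        (∏ i, ((n i).choose (k i) : ℝ)) * a (fun i => n i - k i) *
          genFallingFactorial ω x (∑ i, k i) := by
  rw [Qpoly, eval_finset_sum]
  apply Finset.sum_congr rfl
  intro k _
  rw [eval_mul, eval_C, ffP_eval]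


/-- A multi-indexed polynomial set is multiple `Δ_ω`-Appell, i.e.
`Δ_ω P_n = ∑_j n_j P_{n - e_j}` (a term whose index would be negative is omitted since its
coefficient `n_j` vanishes), iff it has an explicit representation in terms of the generalized
falling factorials with coefficients `a_{n-k}`, `a_0 ≠ 0`. -/
theorem multipleDeltaAppell_iff_representation_multi (r : ℕ) (hr : 1 ≤ r) (ω : ℝ) (hω : ω ≠ 0)
    (P : (Fin r → ℕ) → Polynomial ℝ) (hdeg : ∀ n : Fin r → ℕ, (P n).natDegree = ∑ i, n i) :
    (∀ n : Fin r → ℕ, deltaOmega ω (P n) =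
        ∑ j : Fin r, Polynomial.C ((n j : ℝ)) * P (Function.update n j (n j - 1))) ↔
      ∃ a : (Fin r → ℕ) → ℝ, a 0 ≠ 0 ∧
        ∀ (n : Fin r → ℕ) (x : ℝ),
          (P n).eval x =
            ∑ k ∈ Fintype.piFinset (fun i => Finset.range (n i + 1)),
              (∏ i, ((n i).choose (k i) : ℝ)) * a (fun i => n i - k i) *
                genFallingFactorial ω x (∑ i, k i) := by
  constructor
  · intro hApp
    set a : (Fin r → ℕ) → ℝ := fun m => (P m).eval 0 with ha
    have key : ∀ N : ℕ, ∀ n : Fin r → ℕ, (∑ i, n i) = N → P n = Qpoly ω a n := by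
      intro N
      induction N using Nat.strong_induction_on with
      | _ N ih =>
        intro n hn
        have hsub : deltaOmega ω (P n - Qpoly ω a n) =
            deltaOmega ω (P n) - deltaOmega ω (Qpoly ω a n) := by
          simp only [deltaOmega, sub_comp]
          ring
        have hδ : deltaOmega ω (P n - Qpoly ω a n) = 0 := by
          rw [hsub, hApp n, deltaOmega_Qpoly ω hω a n, ← Finset.sum_sub_distrib]
          apply Finset.sum_eq_zero
          intro j _
          rcases Nat.eq_zero_or_pos (n j) with h0 | hpos
          · simp [h0]
          · have hle : n j ≤ ∑ i, n i :=
              Finset.single_le_sum (fun i _ => Nat.zero_le (n i)) (Finset.mem_univ j)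
            have hlt : ∑ i, Function.update n j (n j - 1) i < N := by
              rw [sum_update_pred n j hpos]
              omega
            rw [ih _ hlt _ rfl, sub_self]
        have hC := eq_C_of_deltaOmega_eq_zero ω hω _ hδ
        have h0 : (P n - Qpoly ω a n).eval 0 = 0 := by
          rw [eval_sub, Qpoly_eval_zero]
          simp [ha]
        rw [h0, map_zero, sub_eq_zero] at hC
        exact hC
    refine ⟨a, ?_, ?_⟩
    · intro ha0
      set j0 : Fin r := ⟨0, hr⟩
      set n1 : Fin r → ℕ := Function.update (fun _ : Fin r => 0) j0 1 with hn1
      have hP0 : P 0 = 0 := by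
        have hd : (P 0).natDegree = 0 := by rw [hdeg]; simp
        obtain ⟨c, hc⟩ := Polynomial.natDegree_eq_zero.mp hd
        have : c = 0 := by
          have h := ha0
          simp only [ha] at h
          rw [← hc, eval_C] at h
          exact h
        rw [← hc, this, map_zero]
      have hst := hApp n1
      have hsum1 : ∑ j : Fin r, C ((n1 j : ℝ)) * P (Function.update n1 j (n1 j - 1)) = P 0 := by
        rw [Finset.sum_eq_single j0]
        · have h1 : n1 j0 = 1 := Function.update_self j0 1 _
          rw [h1]
          have h2 : Function.update n1 j0 (1 - 1) = 0 := by
            funext i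
            rcases eq_or_ne i j0 with rfl | hij
            · simp
            · simp [hn1, Function.update_of_ne hij]
          rw [h2]
          simp
        · intro j _ hj
          have : n1 j = 0 := Function.update_of_ne hj 1 _
          rw [this]
          simp
        · intro h
          exact absurd (Finset.mem_univ j0) h
      rw [hsum1, hP0] at hst
      have hCn1 := eq_C_of_deltaOmega_eq_zero ω hω _ hst
      have : (P n1).natDegree = 0 := by rw [hCn1]; exact natDegree_C _
      rw [hdeg n1] at this
      have : ∑ i, n1 i = 1 := by
        rw [hn1, Finset.sum_update_of_mem (Finset.mem_univ j0)]
        simp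
      omega
    · intro n x
      rw [key (∑ i, n i) n rfl, Qpoly_eval]
  · rintro ⟨a, _, hrep⟩ n
    have hPQ : ∀ m, P m = Qpoly ω a m := by
      intro m
      apply Polynomial.funext
      intro x
      rw [hrep m x, Qpoly_eval]
    simp only [hPQ]
    exact deltaOmega_Qpoly ω hω a n
end
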